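/- arXiv:2010.14715 — 6 statements merged into one kernel-verified Lean document; each statement's English description precedes it below -/
import Mathlib

section
/- Let (𝕏, d) be a complete separable metric space with a distinguished point 0, equipped with a scaling action (T_a)_{a>0}. Let ξ be a random element of 𝕏 which is non-zero. If a', a'' > 0 and T_{a'}(ξ) and T_{a''}(ξ) have the same distribution (equal pushforward laws on 𝕏), then a' = a''. -/
open MeasureTheory Filter Topology

/-- A scaling action on a metric space `𝕏` with distinguished point `z`:
a family `T a : 𝕏 → 𝕏`, `a ∈ (0,∞)`, which is a multiplicative group action (i),(ii),
jointly (sequentially) continuous (iii), radially monotone (iv), and such that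
`dist (T a x) z → 0` as `a → 0⁺` (v). -/
structure ScalingAction (𝕏 : Type*) [MetricSpace 𝕏] (z : 𝕏) where
  T : ℝ → 𝕏 → 𝕏
  comp : ∀ ⦃a b : ℝ⦄, 0 < a → 0 < b → ∀ x, T a (T b x) = T (a * b) x
  one_eq : ∀ x, T 1 x = x
  map_zero : ∀ ⦃a : ℝ⦄, 0 < a → T a z = z
  cont : ∀ ⦃a : ℝ⦄, 0 < a → ∀ (x : 𝕏) (an : ℕ → ℝ) (xn : ℕ → 𝕏),
    Tendsto an atTop (𝓝 a) → Tendsto xn atTop (𝓝 x) →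
      Tendsto (fun n => T (an n) (xn n)) atTop (𝓝 (T a x))
  mono : ∀ ⦃a b : ℝ⦄, 0 < a → a < b → ∀ ⦃x : 𝕏⦄, x ≠ z →
    dist (T a x) z < dist (T b x) z
  tendsto_zero : ∀ x : 𝕏, Tendsto (fun a => T a x) (𝓝[>] (0 : ℝ)) (𝓝 z)

lemma ScalingAction.continuous_T {𝕏 : Type*} [MetricSpace 𝕏] {z : 𝕏}
    (S : ScalingAction 𝕏 z) {a : ℝ} (ha : 0 < a) : Continuous (S.T a) := by
  apply continuous_iff_seqContinuous.mpr
  intro xn x hx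
  exact S.cont ha x (fun _ => a) xn tendsto_const_nhds hx

lemma key_lemma {𝕏 : Type*} [MetricSpace 𝕏] [MeasurableSpace 𝕏] [BorelSpace 𝕏]
    (z : 𝕏) (S : ScalingAction 𝕏 z)
    {Ω : Type*} [MeasurableSpace Ω] (P : Measure Ω) [IsProbabilityMeasure P]
    (ξ : Ω → 𝕏) (hξ : Measurable ξ) (hnz : P {ω | ξ ω = z} < 1)
    (a' a'' : ℝ) (ha' : 0 < a') (ha'' : 0 < a'') (hlt : a' < a'')
    (h : P.map (fun ω => S.T a' (ξ ω)) = P.map (fun ω => S.T a'' (ξ ω))) :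
    False := by
  set G : 𝕏 → ℝ := fun x => dist x z / (1 + dist x z) with hG
  have hGc : Continuous G := by
    apply Continuous.div (continuous_id.dist continuous_const)
      (continuous_const.add (continuous_id.dist continuous_const))
    intro x
    exact ne_of_gt (add_pos_of_pos_of_nonneg one_pos dist_nonneg)
  have hGmono : ∀ s t : ℝ, 0 ≤ s → s < t → s / (1 + s) < t / (1 + t) := by
    intro s t hs hst
    rw [div_lt_div_iff₀ (by linarith) (by linarith)]
    nlinarith
  have hGbd : ∀ x : 𝕏, ‖G x‖ ≤ 1 := by
    intro x
    rw [Real.norm_eq_abs, abs_of_nonneg (by positivity)]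
    exact div_le_one_of_le₀ (by linarith [dist_nonneg (x := x) (y := z)]) (by positivity)
  -- the two composed random variables
  have hm' : Measurable (fun ω => S.T a' (ξ ω)) := (S.continuous_T ha').measurable.comp hξ
  have hm'' : Measurable (fun ω => S.T a'' (ξ ω)) := (S.continuous_T ha'').measurable.comp hξ
  have hint : ∀ (f : Ω → 𝕏), Measurable f → Integrable (fun ω => G (f ω)) P := by
    intro f hf
    apply Integrable.mono' (integrable_const (1 : ℝ))
      (hGc.measurable.comp hf).aestronglyMeasurable
    exact Filter.Eventually.of_forall fun ω => hGbd (f ω)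
  have hIeq : ∫ ω, G (S.T a' (ξ ω)) ∂P = ∫ ω, G (S.T a'' (ξ ω)) ∂P := by
    rw [← integral_map hm'.aemeasurable hGc.aestronglyMeasurable,
        ← integral_map hm''.aemeasurable hGc.aestronglyMeasurable, h]
  set F : Ω → ℝ := fun ω => G (S.T a'' (ξ ω)) - G (S.T a' (ξ ω)) with hF
  have hFnn : ∀ ω, 0 ≤ F ω := by
    intro ω
    rcases eq_or_ne (ξ ω) z with hz | hz
    · simp [hF, hG, hz, S.map_zero ha', S.map_zero ha'']
    · have := S.mono ha' hlt hz
      have := hGmono _ _ dist_nonneg this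
      simp only [hF, hG]
      linarith
  have hFint : Integrable F P := (hint _ hm'').sub (hint _ hm')
  have hFzero : ∫ ω, F ω ∂P = 0 := by
    rw [integral_sub (hint _ hm'') (hint _ hm'), hIeq]
    ring
  have hFae : F =ᵐ[P] 0 :=
    (integral_eq_zero_iff_of_nonneg (fun ω => hFnn ω) hFint).mp hFzero
  -- but F > 0 on {ξ ≠ z}, which has positive measure
  have hsub : {ω | ξ ω ≠ z} ⊆ {ω | F ω ≠ 0} := by
    intro ω hz
    have := S.mono ha' hlt hz
    have := hGmono _ _ dist_nonneg this
    simp only [Set.mem_setOf_eq, hF, hG]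
    intro hc
    linarith
  have hnull : P {ω | F ω ≠ 0} = 0 := ae_iff.mp hFae
  have h0 : P {ω | ξ ω ≠ z} = 0 := measure_mono_null hsub hnull
  have hms : MeasurableSet {ω | ξ ω = z} := hξ (measurableSet_singleton z)
  have : P {ω | ξ ω = z} = 1 := (prob_compl_eq_zero_iff hms).mp h0
  exact absurd this (ne_of_lt hnz)

/-- If `ξ` is a non-zero random element of a complete separable metric space `𝕏` carrying a
scaling action, and `T a' ξ` and `T a'' ξ` have the same law for `a', a'' > 0`, then
`a' = a''`. -/
theorem scalingAction_law_eq_imp_scale_eq {𝕏 : Type*} [MetricSpace 𝕏] [CompleteSpace 𝕏]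
    [TopologicalSpace.SeparableSpace 𝕏] [MeasurableSpace 𝕏] [BorelSpace 𝕏]
    (z : 𝕏) (S : ScalingAction 𝕏 z)
    {Ω : Type*} [MeasurableSpace Ω] (P : Measure Ω) [IsProbabilityMeasure P]
    (ξ : Ω → 𝕏) (hξ : Measurable ξ) (hnz : P {ω | ξ ω = z} < 1)
    (a' a'' : ℝ) (ha' : 0 < a') (ha'' : 0 < a'')
    (h : P.map (fun ω => S.T a' (ξ ω)) = P.map (fun ω => S.T a'' (ξ ω))) :
    a' = a'' := by
  rcases lt_trichotomy a' a'' with hlt | heq | hgt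
  · exact absurd h (fun h => key_lemma z S P ξ hξ hnz a' a'' ha' ha'' hlt h)
  · exact heq
  · exact absurd h.symm (fun h => key_lemma z S P ξ hξ hnz a'' a' ha'' ha' hgt h)
end

section
/- (Convergence to types for scaling actions.) Let (𝕏, d) be a complete separable metric space with a distinguished point 0, equipped with a scaling action (T_a)_{a>0}. Let ξ_n, ξ, ξ̃ be random elements of 𝕏 and a_n > 0 be positive reals. Suppose ξ_n → ξ in distribution and T_{a_n}(ξ_n) → ξ̃ in distribution, and that both ξ and ξ̃ are non-zero. Then there exists a > 0 such that a_n → a and ξ̃ has the same distribution as T_a(ξ). -/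
open MeasureTheory Filter Topology
open scoped ENNReal NNReal BoundedContinuousFunction

namespace SCTT
open BoundedContinuousFunction

variable {𝕏 : Type*} [MetricSpace 𝕏]

lemma contPair {z : 𝕏} (S : ScalingAction 𝕏 z) {a : ℝ} (ha : 0 < a) (x : 𝕏) :
    ContinuousAt (fun p : ℝ × 𝕏 => S.T p.1 p.2) (a, x) := by
  have h : ∀ u : ℕ → ℝ × 𝕏, Tendsto u atTop (𝓝 (a, x)) →
      Tendsto (fun n => S.T (u n).1 (u n).2) atTop (𝓝 (S.T a x)) := by
    intro u hu
    exact S.cont ha x _ _ ((continuous_fst.tendsto _).comp hu) ((continuous_snd.tendsto _).comp hu)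
  exact tendsto_iff_seq_tendsto.mpr h

lemma contT {z : 𝕏} (S : ScalingAction 𝕏 z) {a : ℝ} (ha : 0 < a) : Continuous (S.T a) := by
  rw [continuous_iff_continuousAt]
  intro x
  exact (contPair S ha x).comp ((continuous_const.prodMk continuous_id).continuousAt)

/-- Key technical lemma: if `μ n → ν` weakly, `g n` uniformly bounded BCFs which converge to `0`
locally uniformly in the appropriate sense, then `∫ g n dμ n → 0`. -/
lemma cc [MeasurableSpace 𝕏] [OpensMeasurableSpace 𝕏]
    (μ : ℕ → Measure 𝕏) [hPμ : ∀ n, IsProbabilityMeasure (μ n)]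
    (ν : Measure 𝕏) [hPν : IsProbabilityMeasure ν]
    (hw : ∀ f : 𝕏 →ᵇ ℝ, Tendsto (fun n => ∫ x, f x ∂(μ n)) atTop (𝓝 (∫ x, f x ∂ν)))
    (g : ℕ → 𝕏 →ᵇ ℝ) (C : ℝ) (hC : ∀ n x, |g n x| ≤ C)
    (hH : ∀ ε > (0:ℝ), ∀ x : 𝕏, ∃ m : ℕ, ∃ δ > (0:ℝ), ∀ n ≥ m, ∀ y, dist y x < δ → |g n y| ≤ ε) :
    Tendsto (fun n => ∫ x, g n x ∂(μ n)) atTop (𝓝 0) := by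
  set K := max C 0 with hKdef
  have hK : ∀ n x, |g n x| ≤ K := fun n x => (hC n x).trans (le_max_left _ _)
  have hK0 : (0:ℝ) ≤ K := le_max_right _ _
  rw [Metric.tendsto_atTop]
  intro ε hε
  set ε₁ : ℝ := min (ε / (2 * (1 + 2 * K))) (1/2) with hε₁def
  have hd : (0:ℝ) < 1 + 2*K := by linarith
  have hε₁ : 0 < ε₁ := lt_min (div_pos hε (by linarith)) (by norm_num)
  have hε₁half : ε₁ ≤ 1/2 := min_le_right _ _
  have hε₁le : ε₁ * (1 + 2*K) < ε := by
    have h1 : ε₁ ≤ ε / (2 * (1 + 2 * K)) := min_le_left _ _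
    have h2 : ε₁ * (1 + 2*K) ≤ (ε / (2 * (1 + 2 * K))) * (1 + 2*K) := by
      apply mul_le_mul_of_nonneg_right h1 (by linarith)
    have h3 : (ε / (2 * (1 + 2 * K))) * (1 + 2*K) = ε / 2 := by
      field_simp
    rw [h3] at h2; linarith
  set V : ℕ → Set 𝕏 := fun m => {x | ∃ δ > (0:ℝ), ∀ n ≥ m, ∀ y, dist y x < δ → |g n y| ≤ ε₁}
    with hVdef
  have hVopen : ∀ m, IsOpen (V m) := by
    intro m
    rw [Metric.isOpen_iff]
    rintro x ⟨δ, hδ, hx⟩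
    refine ⟨δ/2, by linarith, fun x' hx' => ⟨δ/2, by linarith, fun n hn y hy => ?_⟩⟩
    have hx'2 : dist x' x < δ/2 := Metric.mem_ball.mp hx'
    exact hx n hn y (by
      calc dist y x ≤ dist y x' + dist x' x := dist_triangle _ _ _
      _ < δ := by linarith)
  have hVmono : Monotone V := by
    intro m₁ m₂ hm x hx
    obtain ⟨δ, hδ, h⟩ := hx
    exact ⟨δ, hδ, fun n hn => h n (le_trans hm hn)⟩
  have hVunion : (⋃ m, V m) = Set.univ := by
    ext x
    simp only [Set.mem_iUnion, Set.mem_univ, iff_true]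
    obtain ⟨m, δ, hδ, h⟩ := hH ε₁ hε₁ x
    exact ⟨m, δ, hδ, h⟩
  have hνV : Tendsto (fun m => ν (V m)) atTop (𝓝 1) := by
    have h := tendsto_measure_iUnion_atTop (μ := ν) hVmono
    rwa [hVunion, measure_univ] at h
  set e := ENNReal.ofReal ε₁ with hedef
  have he0 : e ≠ 0 := (ENNReal.ofReal_pos.mpr hε₁).ne'
  have he1 : e ≤ 1 := by
    rw [hedef, ← ENNReal.ofReal_one]
    exact ENNReal.ofReal_le_ofReal (by linarith)
  have hlt : (1:ℝ≥0∞) - e < 1 := ENNReal.sub_lt_self ENNReal.one_ne_top one_ne_zero he0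
  obtain ⟨m, hm⟩ := (hνV.eventually (eventually_gt_nhds hlt)).exists
  -- portmanteau
  set Pμ : ℕ → ProbabilityMeasure 𝕏 := fun n => ⟨μ n, hPμ n⟩ with hPμdef
  set Pν : ProbabilityMeasure 𝕏 := ⟨ν, hPν⟩ with hPνdef
  have hwP : Tendsto Pμ atTop (𝓝 Pν) :=
    ProbabilityMeasure.tendsto_iff_forall_integral_tendsto.mpr hw
  have hlim : (1 - e) < atTop.liminf fun n => (μ n) (V m) := by
    have h := ProbabilityMeasure.le_liminf_measure_open_of_tendsto hwP (hVopen m)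
    exact lt_of_lt_of_le hm h
  have hev : ∀ᶠ n in atTop, (1 - e) < μ n (V m) := eventually_lt_of_lt_liminf hlim
  obtain ⟨N, hN⟩ := hev.exists_forall_of_atTop
  refine ⟨max N m, fun n hn => ?_⟩
  have hnN : n ≥ N := le_trans (le_max_left _ _) hn
  have hnm : n ≥ m := le_trans (le_max_right _ _) hn
  have hcompl : μ n (V m)ᶜ ≤ e := by
    have h1 : μ n (V m)ᶜ = 1 - μ n (V m) :=
      prob_compl_eq_one_sub (hVopen m).measurableSet
    rw [h1]
    calc (1:ℝ≥0∞) - μ n (V m) ≤ 1 - (1 - e) := tsub_le_tsub_left (hN n hnN).le 1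
    _ = e := by
      rw [ENNReal.sub_sub_cancel ENNReal.one_ne_top he1]
  have hcomplR : (μ n (V m)ᶜ).toReal ≤ ε₁ := by
    have := ENNReal.toReal_mono ENNReal.ofReal_ne_top hcompl
    rwa [ENNReal.toReal_ofReal hε₁.le] at this
  have hint : Integrable (g n) (μ n) := (g n).integrable (μ n)
  have hintabs : Integrable (fun x => |g n x|) (μ n) := hint.abs
  -- bound the integral
  have hsplit : ∫ x, |g n x| ∂(μ n) =
      (∫ x in V m, |g n x| ∂(μ n)) + ∫ x in (V m)ᶜ, |g n x| ∂(μ n) :=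
    (integral_add_compl (hVopen m).measurableSet hintabs).symm
  have hb1 : ∫ x in V m, |g n x| ∂(μ n) ≤ ε₁ := by
    have h1 : ∫ x in V m, |g n x| ∂(μ n) ≤ ∫ _x in V m, ε₁ ∂(μ n) := by
      apply setIntegral_mono_on hintabs.integrableOn ((integrableOn_const_iff (C := ε₁)).mpr (Or.inr ?_))
        (hVopen m).measurableSet
      · rintro x ⟨δ, hδ, hx⟩
        exact hx n hnm x (by simp [hδ])
      · exact lt_of_le_of_lt (measure_mono (Set.subset_univ _)) (by simp)
    rw [setIntegral_const] at h1
    have h2 : (μ n (V m)).toReal ≤ 1 := by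
      simpa using ENNReal.toReal_mono ENNReal.one_ne_top (prob_le_one (μ := μ n) (s := V m))
    calc ∫ x in V m, |g n x| ∂(μ n) ≤ (μ n (V m)).toReal • ε₁ := h1
    _ = (μ n (V m)).toReal * ε₁ := by rw [smul_eq_mul]
    _ ≤ 1 * ε₁ := mul_le_mul_of_nonneg_right h2 hε₁.le
    _ = ε₁ := one_mul _
  have hb2 : ∫ x in (V m)ᶜ, |g n x| ∂(μ n) ≤ K * ε₁ := by
    have h1 : ∫ x in (V m)ᶜ, |g n x| ∂(μ n) ≤ ∫ _x in (V m)ᶜ, K ∂(μ n) := by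
      apply setIntegral_mono_on hintabs.integrableOn ((integrableOn_const_iff (C := K)).mpr (Or.inr ?_))
        (hVopen m).measurableSet.compl (fun x _ => hK n x)
      exact lt_of_le_of_lt (measure_mono (Set.subset_univ _)) (by simp)
    rw [setIntegral_const] at h1
    calc ∫ x in (V m)ᶜ, |g n x| ∂(μ n) ≤ (μ n (V m)ᶜ).toReal * K := h1
    _ ≤ ε₁ * K := mul_le_mul_of_nonneg_right hcomplR hK0
    _ = K * ε₁ := mul_comm _ _
  have habs : |∫ x, g n x ∂(μ n)| ≤ ∫ x, |g n x| ∂(μ n) := by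
    simpa [Real.norm_eq_abs] using norm_integral_le_integral_norm (μ := μ n) (f := fun x => g n x)
  rw [Real.dist_eq, sub_zero]
  calc |∫ x, g n x ∂(μ n)| ≤ ∫ x, |g n x| ∂(μ n) := habs
  _ ≤ ε₁ + K * ε₁ := by rw [hsplit]; exact add_le_add hb1 hb2
  _ ≤ ε₁ * (1 + 2*K) := by nlinarith
  _ < ε := hε₁le


/-- Composition of a BCF with the scaling map, as a BCF. -/
noncomputable def Tbcf {z : 𝕏} (S : ScalingAction 𝕏 z) {b : ℝ} (hb : 0 < b) (f : 𝕏 →ᵇ ℝ) :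
    𝕏 →ᵇ ℝ :=
  f.compContinuous ⟨S.T b, contT S hb⟩

@[simp] lemma Tbcf_apply {z : 𝕏} (S : ScalingAction 𝕏 z) {b : ℝ} (hb : 0 < b) (f : 𝕏 →ᵇ ℝ)
    (x : 𝕏) : Tbcf S hb f x = f (S.T b x) := rfl

lemma hH_conv {z : 𝕏} (S : ScalingAction 𝕏 z) (f : 𝕏 →ᵇ ℝ) {a₀ : ℝ} (ha₀ : 0 < a₀)
    (c : ℕ → ℝ) (hc : Tendsto c atTop (𝓝 a₀)) :
    ∀ ε > (0:ℝ), ∀ x : 𝕏, ∃ m : ℕ, ∃ δ > (0:ℝ), ∀ n ≥ m, ∀ y, dist y x < δ →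
      |f (S.T (c n) y) - f (S.T a₀ y)| ≤ ε := by
  intro ε hε x
  have hG : ContinuousAt (fun p : ℝ × 𝕏 => f (S.T p.1 p.2) - f (S.T a₀ p.2)) (a₀, x) := by
    have h1 : ContinuousAt (fun p : ℝ × 𝕏 => f (S.T p.1 p.2)) (a₀, x) :=
      (map_continuous f).continuousAt.comp (contPair S ha₀ x)
    have h2 : Continuous (fun p : ℝ × 𝕏 => f (S.T a₀ p.2)) :=
      (map_continuous f).comp ((contT S ha₀).comp continuous_snd)
    exact h1.sub h2.continuousAt
  rw [Metric.continuousAt_iff] at hG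
  obtain ⟨δ, hδ, hGδ⟩ := hG ε hε
  obtain ⟨m, hm⟩ := Metric.tendsto_atTop.mp hc (δ/2) (by linarith)
  refine ⟨m, δ/2, by linarith, fun n hn y hy => ?_⟩
  have hpd : dist ((c n, y) : ℝ × 𝕏) (a₀, x) < δ := by
    rw [Prod.dist_eq]
    exact max_lt (lt_of_lt_of_le (hm n hn) (by linarith)) (by linarith)
  have h := hGδ hpd
  rw [Real.dist_eq, sub_self, sub_zero] at h
  exact le_of_lt h

lemma hH_zero {z : 𝕏} (S : ScalingAction 𝕏 z) (f : 𝕏 →ᵇ ℝ)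
    (b : ℕ → ℝ) (hb : ∀ n, 0 < b n) (hb0 : Tendsto b atTop (𝓝 0)) :
    ∀ ε > (0:ℝ), ∀ x : 𝕏, ∃ m : ℕ, ∃ δ > (0:ℝ), ∀ n ≥ m, ∀ y, dist y x < δ →
      |f (S.T (b n) y) - f z| ≤ ε := by
  intro ε hε x
  obtain ⟨η, hη, hfη⟩ := Metric.continuousAt_iff.mp ((map_continuous f).continuousAt (x := z)) ε hε
  -- find c > 0 with dist (T c x) z < η/2
  have hev : ∀ᶠ c in 𝓝[>] (0:ℝ), dist (S.T c x) z < η/2 := by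
    have h2 : ∀ᶠ w in 𝓝 z, dist w z < η/2 := by
      have := Metric.ball_mem_nhds z (show (0:ℝ) < η/2 by linarith)
      filter_upwards [this] with w hw using Metric.mem_ball.mp hw
    exact (S.tendsto_zero x).eventually h2
  obtain ⟨c, hcd, hcpos⟩ := (hev.and (eventually_mem_nhdsWithin)).exists
  rw [Set.mem_Ioi] at hcpos
  -- continuity of dist (T c ·) z at x
  have hcont : ContinuousAt (fun y => dist (S.T c y) z) x :=
    ((contT S hcpos).dist continuous_const).continuousAt
  have hev2 : ∀ᶠ y in 𝓝 x, dist (S.T c y) z < η := by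
    apply hcont.eventually_lt_const
    linarith
  obtain ⟨δ, hδ, hδy⟩ := Metric.eventually_nhds_iff.mp hev2
  obtain ⟨m, hm⟩ := (Metric.tendsto_atTop.mp hb0 c hcpos)
  refine ⟨m, δ, hδ, fun n hn y hy => ?_⟩
  have hbnc : b n < c := by
    have := hm n hn
    rw [Real.dist_eq, sub_zero, abs_of_pos (hb n)] at this
    exact this
  by_cases hyz : y = z
  · subst hyz
    rw [S.map_zero (hb n), sub_self, abs_zero]
    exact hε.le
  · have h1 : dist (S.T (b n) y) z < dist (S.T c y) z := S.mono (hb n) hbnc hyz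
    have h2 : dist (S.T c y) z < η := hδy (show dist y x < δ from hy)
    have h3 := hfη (show dist (S.T (b n) y) z < η by linarith)
    rw [Real.dist_eq] at h3
    exact h3.le


/-- `x ↦ min (dist x z) M` as a bounded continuous function. -/
noncomputable def distMin (z : 𝕏) {M : ℝ} (hM : 0 < M) : 𝕏 →ᵇ ℝ :=
  BoundedContinuousFunction.mkOfBound
    ⟨fun x => min (dist x z) M, (Continuous.dist continuous_id continuous_const).min
      continuous_const⟩ M
    (fun x y => by
      simp only [ContinuousMap.coe_mk]
      rw [Real.dist_eq, abs_sub_le_iff]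
      have h1 : min (dist x z) M ≤ M := min_le_right _ _
      have h2 : (0:ℝ) ≤ min (dist x z) M := le_min dist_nonneg hM.le
      have h3 : min (dist y z) M ≤ M := min_le_right _ _
      have h4 : (0:ℝ) ≤ min (dist y z) M := le_min dist_nonneg hM.le
      constructor <;> linarith)

@[simp] lemma distMin_apply (z : 𝕏) {M : ℝ} (hM : 0 < M) (x : 𝕏) :
    distMin z hM x = min (dist x z) M := rfl

section Meas
variable [MeasurableSpace 𝕏] [BorelSpace 𝕏]

lemma key {z : 𝕏} (S : ScalingAction 𝕏 z)
    (μ : ℕ → Measure 𝕏) [hPμ : ∀ n, IsProbabilityMeasure (μ n)]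
    (κ₀ : Measure 𝕏) [IsProbabilityMeasure κ₀]
    (hw : ∀ f : 𝕏 →ᵇ ℝ, Tendsto (fun n => ∫ x, f x ∂(μ n)) atTop (𝓝 (∫ x, f x ∂κ₀)))
    (c : ℕ → ℝ) (hc : ∀ n, 0 < c n) {a₀ : ℝ} (ha₀ : 0 < a₀) (hca : Tendsto c atTop (𝓝 a₀))
    (f : 𝕏 →ᵇ ℝ) :
    Tendsto (fun n => ∫ x, f (S.T (c n) x) ∂(μ n)) atTop (𝓝 (∫ x, f (S.T a₀ x) ∂κ₀)) := by
  set g : ℕ → 𝕏 →ᵇ ℝ := fun n => Tbcf S (hc n) f - Tbcf S ha₀ f with hgdef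
  have hgapp : ∀ n x, g n x = f (S.T (c n) x) - f (S.T a₀ x) := fun n x => rfl
  have hgb : ∀ n x, |g n x| ≤ ‖f‖ + ‖f‖ := by
    intro n x
    rw [hgapp]
    calc |f (S.T (c n) x) - f (S.T a₀ x)|
        ≤ |f (S.T (c n) x)| + |f (S.T a₀ x)| := by
          simpa [Real.norm_eq_abs] using norm_sub_le (f (S.T (c n) x)) (f (S.T a₀ x))
    _ ≤ ‖f‖ + ‖f‖ := add_le_add
        (by simpa [Real.norm_eq_abs] using f.norm_coe_le_norm (S.T (c n) x))
        (by simpa [Real.norm_eq_abs] using f.norm_coe_le_norm (S.T a₀ x))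
  have hcc : Tendsto (fun n => ∫ x, g n x ∂(μ n)) atTop (𝓝 0) := by
    apply cc μ κ₀ hw g (‖f‖ + ‖f‖) hgb
    intro ε hε x
    obtain ⟨m, δ, hδ, h⟩ := hH_conv S f ha₀ c hca ε hε x
    exact ⟨m, δ, hδ, fun n hn y hy => by rw [hgapp]; exact h n hn y hy⟩
  have hlim2 : Tendsto (fun n => ∫ x, f (S.T a₀ x) ∂(μ n)) atTop
      (𝓝 (∫ x, f (S.T a₀ x) ∂κ₀)) := hw (Tbcf S ha₀ f)
  have hsum : ∀ n, ∫ x, f (S.T (c n) x) ∂(μ n)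
      = (∫ x, g n x ∂(μ n)) + ∫ x, f (S.T a₀ x) ∂(μ n) := by
    intro n
    have hint1 : Integrable (fun x => f (S.T (c n) x)) (μ n) := (Tbcf S (hc n) f).integrable _
    have hint2 : Integrable (fun x => f (S.T a₀ x)) (μ n) := (Tbcf S ha₀ f).integrable _
    have hg' : ∫ x, g n x ∂(μ n) = ∫ x, (f (S.T (c n) x) - f (S.T a₀ x)) ∂(μ n) := rfl
    rw [hg', integral_sub hint1 hint2]
    ring
  have hfin := hcc.add hlim2
  rw [zero_add] at hfin
  exact Tendsto.congr (fun n => (hsum n).symm) hfin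

lemma degen {z : 𝕏} (S : ScalingAction 𝕏 z)
    (μ : ℕ → Measure 𝕏) [hPμ : ∀ n, IsProbabilityMeasure (μ n)]
    (κ₀ : Measure 𝕏) [IsProbabilityMeasure κ₀]
    (hw : ∀ f : 𝕏 →ᵇ ℝ, Tendsto (fun n => ∫ x, f x ∂(μ n)) atTop (𝓝 (∫ x, f x ∂κ₀)))
    (b : ℕ → ℝ) (hb : ∀ n, 0 < b n) (hb0 : Tendsto b atTop (𝓝 0))
    (f : 𝕏 →ᵇ ℝ) :
    Tendsto (fun n => ∫ x, f (S.T (b n) x) ∂(μ n)) atTop (𝓝 (f z)) := by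
  set g : ℕ → 𝕏 →ᵇ ℝ := fun n =>
    Tbcf S (hb n) f - BoundedContinuousFunction.const 𝕏 (f z) with hgdef
  have hgapp : ∀ n x, g n x = f (S.T (b n) x) - f z := fun n x => rfl
  have hgb : ∀ n x, |g n x| ≤ ‖f‖ + ‖f‖ := by
    intro n x
    rw [hgapp]
    calc |f (S.T (b n) x) - f z|
        ≤ |f (S.T (b n) x)| + |f z| := by
          simpa [Real.norm_eq_abs] using norm_sub_le (f (S.T (b n) x)) (f z)
    _ ≤ ‖f‖ + ‖f‖ := add_le_add
        (by simpa [Real.norm_eq_abs] using f.norm_coe_le_norm (S.T (b n) x))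
        (by simpa [Real.norm_eq_abs] using f.norm_coe_le_norm z)
  have hcc : Tendsto (fun n => ∫ x, g n x ∂(μ n)) atTop (𝓝 0) := by
    apply cc μ κ₀ hw g (‖f‖ + ‖f‖) hgb
    intro ε hε x
    obtain ⟨m, δ, hδ, h⟩ := hH_zero S f b hb hb0 ε hε x
    exact ⟨m, δ, hδ, fun n hn y hy => by rw [hgapp]; exact h n hn y hy⟩
  have hsum : ∀ n, ∫ x, f (S.T (b n) x) ∂(μ n)
      = (∫ x, g n x ∂(μ n)) + f z := by
    intro n
    have hint1 : Integrable (fun x => f (S.T (b n) x)) (μ n) := (Tbcf S (hb n) f).integrable _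
    have hg' : ∫ x, g n x ∂(μ n) = ∫ x, (f (S.T (b n) x) - f z) ∂(μ n) := rfl
    rw [hg', integral_sub hint1 (integrable_const (f z)), integral_const]
    simp [measure_univ]
  have hfin := hcc.add (tendsto_const_nhds (x := f z) (f := atTop))
  rw [zero_add] at hfin
  exact Tendsto.congr (fun n => (hsum n).symm) hfin

lemma delta_of_forall_integral_eq (z : 𝕏)
    (κ : Measure 𝕏) [IsProbabilityMeasure κ]
    (h : ∀ f : 𝕏 →ᵇ ℝ, ∫ x, f x ∂κ = f z) : κ {x | x ≠ z} = 0 := by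
  have h0 := h (distMin z one_pos)
  rw [distMin_apply, dist_self, min_eq_left zero_le_one] at h0
  have hnn : 0 ≤ᵐ[κ] fun x => (distMin z one_pos) x :=
    ae_of_all _ (fun x => le_min dist_nonneg zero_le_one)
  have hint := (distMin z one_pos).integrable κ
  have heq := (integral_eq_zero_iff_of_nonneg_ae hnn hint).mp h0
  have hae : ∀ᵐ x ∂κ, (distMin z one_pos) x = 0 := heq
  refine measure_mono_null ?_ (ae_iff.mp hae)
  intro x hx
  simp only [Set.mem_setOf_eq, distMin_apply]
  have hpos : 0 < min (dist x z) 1 := lt_min (dist_pos.mpr hx) one_pos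
  exact fun hc => absurd hc (by intro hc'; rw [hc'] at hpos; exact lt_irrefl _ hpos)

lemma measure_eq_of_forall_integral_eq
    (κ₁ κ₂ : Measure 𝕏) [h₁ : IsProbabilityMeasure κ₁] [h₂ : IsProbabilityMeasure κ₂]
    (h : ∀ f : 𝕏 →ᵇ ℝ, ∫ x, f x ∂κ₁ = ∫ x, f x ∂κ₂) : κ₁ = κ₂ := by
  set P₁ : ProbabilityMeasure 𝕏 := ⟨κ₁, h₁⟩ with hP₁
  set P₂ : ProbabilityMeasure 𝕏 := ⟨κ₂, h₂⟩ with hP₂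
  have hc : Tendsto (fun _ : ℕ => P₁) atTop (𝓝 P₂) := by
    rw [ProbabilityMeasure.tendsto_iff_forall_integral_tendsto]
    intro f
    have : (∫ x, f x ∂(P₁ : Measure 𝕏)) = ∫ x, f x ∂(P₂ : Measure 𝕏) := h f
    rw [show (fun _ : ℕ => ∫ x, f x ∂(P₁ : Measure 𝕏)) = fun _ : ℕ => ∫ x, f x ∂(P₂ : Measure 𝕏)
      from funext (fun _ => this)]
    exact tendsto_const_nhds
  have heq : P₁ = P₂ := tendsto_nhds_unique tendsto_const_nhds hc
  exact congrArg (fun p : ProbabilityMeasure 𝕏 => (p : Measure 𝕏)) heq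

lemma uniq_aux {z : 𝕏} (S : ScalingAction 𝕏 z)
    (κ₀ : Measure 𝕏) [IsProbabilityMeasure κ₀] (hnz : κ₀ {x | x ≠ z} ≠ 0)
    {a₀ a₁ : ℝ} (h₀ : 0 < a₀) (hlt : a₀ < a₁)
    (heq : ∀ f : 𝕏 →ᵇ ℝ, ∫ x, f (S.T a₀ x) ∂κ₀ = ∫ x, f (S.T a₁ x) ∂κ₀) : False := by
  have h₁ : 0 < a₁ := h₀.trans hlt
  have hWnull : ∀ M : ℕ, κ₀ {x : 𝕏 | x ≠ z ∧ dist (S.T a₀ x) z < (M:ℝ)+1} = 0 := by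
    intro M
    have hM : (0:ℝ) < (M:ℝ)+1 := by positivity
    set f := distMin z hM with hf
    have hEq := heq f
    have hint0 : Integrable (fun x => f (S.T a₀ x)) κ₀ := (Tbcf S h₀ f).integrable _
    have hint1 : Integrable (fun x => f (S.T a₁ x)) κ₀ := (Tbcf S h₁ f).integrable _
    have hzero : ∫ x, (f (S.T a₁ x) - f (S.T a₀ x)) ∂κ₀ = 0 := by
      rw [integral_sub hint1 hint0, hEq]; ring
    have hnn : 0 ≤ᵐ[κ₀] fun x => f (S.T a₁ x) - f (S.T a₀ x) := by
      apply ae_of_all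
      intro x
      simp only [Pi.zero_apply, sub_nonneg, hf, distMin_apply]
      by_cases hxz : x = z
      · subst hxz
        rw [S.map_zero h₀, S.map_zero h₁]
      · exact min_le_min (S.mono h₀ hlt hxz).le (le_refl _)
    have hae := (integral_eq_zero_iff_of_nonneg_ae hnn (hint1.sub hint0)).mp hzero
    refine measure_mono_null ?_ (ae_iff.mp hae)
    rintro x ⟨hxz, hxM⟩
    simp only [Set.mem_setOf_eq, hf, distMin_apply]
    have hd : dist (S.T a₀ x) z < dist (S.T a₁ x) z := S.mono h₀ hlt hxz
    have hmin0 : min (dist (S.T a₀ x) z) ((M:ℝ)+1) = dist (S.T a₀ x) z := min_eq_left hxM.le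
    have hmin1 : dist (S.T a₀ x) z < min (dist (S.T a₁ x) z) ((M:ℝ)+1) := lt_min hd hxM
    rw [hmin0]
    intro hcontra
    simp only [Pi.zero_apply] at hcontra
    linarith
  have hUnion : {x : 𝕏 | x ≠ z} = ⋃ M : ℕ, {x : 𝕏 | x ≠ z ∧ dist (S.T a₀ x) z < (M:ℝ)+1} := by
    ext x
    simp only [Set.mem_setOf_eq, Set.mem_iUnion]
    constructor
    · intro hx
      obtain ⟨M, hM⟩ := exists_nat_gt (dist (S.T a₀ x) z)
      exact ⟨M, hx, by linarith⟩
    · rintro ⟨M, hM, _⟩; exact hM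
  apply hnz
  rw [hUnion]
  exact measure_iUnion_null hWnull

end Meas
end SCTT

/-- The random elements `ξ n` converge in distribution to the (probability) measure `μ`:
the laws `P.map (ξ n)` converge weakly to `μ`, tested against bounded continuous functions. -/
def TendstoInDistribution {Ω 𝕏 : Type*} [MeasurableSpace Ω] [MeasurableSpace 𝕏]
    [TopologicalSpace 𝕏] (P : Measure Ω) (ξ : ℕ → Ω → 𝕏) (μ : Measure 𝕏) : Prop :=
  ∀ f : BoundedContinuousFunction 𝕏 ℝ,
    Tendsto (fun n => ∫ x, f x ∂(P.map (ξ n))) atTop (𝓝 (∫ x, f x ∂μ))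

/-- Convergence to types for scaling actions: if `ξ n → ξ` in distribution and
`T (a n) (ξ n) → ξ̃` in distribution, with both `ξ` and `ξ̃` non-zero, then `a n → a`
for some `a > 0` and `ξ̃` has the same law as `T a ξ`. -/
theorem scalingAction_convergence_to_types {𝕏 : Type*} [MetricSpace 𝕏] [CompleteSpace 𝕏]
    [TopologicalSpace.SeparableSpace 𝕏] [MeasurableSpace 𝕏] [BorelSpace 𝕏]
    (z : 𝕏) (S : ScalingAction 𝕏 z)
    {Ω : Type*} [MeasurableSpace Ω] (P : Measure Ω) [IsProbabilityMeasure P]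
    (ξn : ℕ → Ω → 𝕏) (ξ ξt : Ω → 𝕏)
    (hξn : ∀ n, Measurable (ξn n)) (hξ : Measurable ξ) (hξt : Measurable ξt)
    (a : ℕ → ℝ) (ha : ∀ n, 0 < a n)
    (h1 : TendstoInDistribution P ξn (P.map ξ))
    (h2 : TendstoInDistribution P (fun n ω => S.T (a n) (ξn n ω)) (P.map ξt))
    (hz1 : P {ω | ξ ω = z} < 1) (hz2 : P {ω | ξt ω = z} < 1) :
    ∃ a₀ : ℝ, 0 < a₀ ∧ Tendsto a atTop (𝓝 a₀) ∧
      P.map ξt = P.map (fun ω => S.T a₀ (ξ ω)) := by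
  classical
  have hTmeas : ∀ {b : ℝ}, 0 < b → Measurable (S.T b) := fun hb => (SCTT.contT S hb).measurable
  haveI hPμ : ∀ n, IsProbabilityMeasure (P.map (ξn n)) := fun n =>
    Measure.isProbabilityMeasure_map (hξn n).aemeasurable
  haveI hPν : ∀ n, IsProbabilityMeasure (P.map (fun ω => S.T (a n) (ξn n ω))) := fun n =>
    Measure.isProbabilityMeasure_map (((hTmeas (ha n)).comp (hξn n)).aemeasurable)
  haveI : IsProbabilityMeasure (P.map ξ) := Measure.isProbabilityMeasure_map hξ.aemeasurable
  haveI : IsProbabilityMeasure (P.map ξt) := Measure.isProbabilityMeasure_map hξt.aemeasurable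
  -- change of variables
  have hswap : ∀ n (f : 𝕏 →ᵇ ℝ) {b : ℝ}, 0 < b →
      ∫ x, f (S.T b x) ∂(P.map (ξn n)) = ∫ y, f y ∂(P.map (fun ω => S.T b (ξn n ω))) := by
    intro n f b hb
    rw [integral_map (f := fun x => f (S.T b x)) (hξn n).aemeasurable
        (((map_continuous f).comp (SCTT.contT S hb)).aestronglyMeasurable),
      integral_map (show AEMeasurable (fun ω => S.T b (ξn n ω)) P from
          ((hTmeas hb).comp (hξn n)).aemeasurable)
        ((map_continuous f).aestronglyMeasurable)]
  have hinv : ∀ n (f : 𝕏 →ᵇ ℝ),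
      ∫ y, f (S.T (a n)⁻¹ y) ∂(P.map (fun ω => S.T (a n) (ξn n ω)))
        = ∫ x, f x ∂(P.map (ξn n)) := by
    intro n f
    have hbinv : 0 < (a n)⁻¹ := inv_pos.mpr (ha n)
    rw [integral_map (f := fun y => f (S.T (a n)⁻¹ y))
        (show AEMeasurable (fun ω => S.T (a n) (ξn n ω)) P from
          ((hTmeas (ha n)).comp (hξn n)).aemeasurable)
        (((map_continuous f).comp (SCTT.contT S hbinv)).aestronglyMeasurable),
      integral_map (hξn n).aemeasurable ((map_continuous f).aestronglyMeasurable)]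
    have hcomp : ∀ ω, S.T (a n)⁻¹ (S.T (a n) (ξn n ω)) = ξn n ω := by
      intro ω
      rw [S.comp hbinv (ha n), inv_mul_cancel₀ (ha n).ne', S.one_eq]
    simp_rw [hcomp]
  -- pushforward degenerate ⇒ random element a.s. equal to z
  have hpush : ∀ (g : Ω → 𝕏), Measurable g → P.map g {x | x ≠ z} = 0 →
      P {ω | g ω = z} = 1 := by
    intro g hg h0
    have hs : {x : 𝕏 | x ≠ z} = ({z} : Set 𝕏)ᶜ := by ext x; simp
    rw [hs, Measure.map_apply hg (measurableSet_singleton z).compl, Set.preimage_compl] at h0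
    have hms : MeasurableSet (g ⁻¹' {z}) := hg (measurableSet_singleton z)
    have h1' := (prob_compl_eq_zero_iff hms).mp h0
    have hset : g ⁻¹' ({z} : Set 𝕏) = {ω | g ω = z} := by ext ω; simp
    rwa [hset] at h1'
  -- no subsequence of `a` tends to zero
  have hnz2 : ∀ (φ : ℕ → ℕ), Tendsto φ atTop atTop →
      ¬ Tendsto (fun k => a (φ k)) atTop (𝓝 0) := by
    intro φ hφ hlim0
    have hdeg : ∀ f : 𝕏 →ᵇ ℝ,
        Tendsto (fun k => ∫ x, f (S.T (a (φ k)) x) ∂(P.map (ξn (φ k)))) atTop (𝓝 (f z)) :=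
      fun f => SCTT.degen S (fun k => P.map (ξn (φ k))) (P.map ξ)
        (fun f => (h1 f).comp hφ) (fun k => a (φ k)) (fun k => ha _) hlim0 f
    have hdeg2 : ∀ f : 𝕏 →ᵇ ℝ, ∫ y, f y ∂(P.map ξt) = f z := by
      intro f
      have hA : Tendsto (fun k => ∫ y, f y ∂(P.map (fun ω => S.T (a (φ k)) (ξn (φ k) ω))))
          atTop (𝓝 (∫ y, f y ∂(P.map ξt))) := (h2 f).comp hφ
      have hEq : ∀ k, ∫ x, f (S.T (a (φ k)) x) ∂(P.map (ξn (φ k)))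
          = ∫ y, f y ∂(P.map (fun ω => S.T (a (φ k)) (ξn (φ k) ω))) :=
        fun k => hswap (φ k) f (ha _)
      exact tendsto_nhds_unique hA (Tendsto.congr hEq (hdeg f))
    have h0 := SCTT.delta_of_forall_integral_eq z (P.map ξt) hdeg2
    exact absurd (hpush ξt hξt h0) hz2.ne
  -- no subsequence of `a` tends to infinity
  have hnotop : ∀ (φ : ℕ → ℕ), Tendsto φ atTop atTop →
      ¬ Tendsto (fun k => a (φ k)) atTop atTop := by
    intro φ hφ hlim
    have hbpos : ∀ k, 0 < (a (φ k))⁻¹ := fun k => inv_pos.mpr (ha _)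
    have hb0 : Tendsto (fun k => (a (φ k))⁻¹) atTop (𝓝 0) := tendsto_inv_atTop_zero.comp hlim
    have hdeg : ∀ f : 𝕏 →ᵇ ℝ, Tendsto (fun k =>
          ∫ y, f (S.T ((a (φ k))⁻¹) y) ∂(P.map (fun ω => S.T (a (φ k)) (ξn (φ k) ω))))
        atTop (𝓝 (f z)) :=
      fun f => SCTT.degen S (fun k => P.map (fun ω => S.T (a (φ k)) (ξn (φ k) ω))) (P.map ξt)
        (fun f => (h2 f).comp hφ) _ hbpos hb0 f
    have hdeg2 : ∀ f : 𝕏 →ᵇ ℝ, ∫ x, f x ∂(P.map ξ) = f z := by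
      intro f
      have hA : Tendsto (fun k => ∫ x, f x ∂(P.map (ξn (φ k)))) atTop
          (𝓝 (∫ x, f x ∂(P.map ξ))) := (h1 f).comp hφ
      have hEq : ∀ k,
          ∫ y, f (S.T ((a (φ k))⁻¹) y) ∂(P.map (fun ω => S.T (a (φ k)) (ξn (φ k) ω)))
          = ∫ x, f x ∂(P.map (ξn (φ k))) := fun k => hinv (φ k) f
      exact tendsto_nhds_unique hA (Tendsto.congr hEq (hdeg f))
    have h0 := SCTT.delta_of_forall_integral_eq z (P.map ξ) hdeg2
    exact absurd (hpush ξ hξ h0) hz1.ne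
  -- boundedness above
  have hbddabove : ∃ L : ℝ, ∀ n, a n ≤ L := by
    by_contra hcon
    push_neg at hcon
    choose φf hφf using hcon
    set φ : ℕ → ℕ := fun k => φf (k : ℝ) with hφdef
    have hgt : ∀ k : ℕ, (k:ℝ) < a (φ k) := fun k => hφf _
    have hφtop : Tendsto φ atTop atTop := by
      rw [tendsto_atTop]
      intro N
      obtain ⟨M, hM⟩ : ∃ M : ℝ, ∀ n < N, a n ≤ M := by
        induction N with
        | zero => exact ⟨0, fun n hn => absurd hn (Nat.not_lt_zero n)⟩
        | succ N ih =>
          obtain ⟨M, hM⟩ := ih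
          refine ⟨max M (a N), fun n hn => ?_⟩
          rcases Nat.lt_succ_iff_lt_or_eq.mp hn with h | h
          · exact (hM n h).trans (le_max_left _ _)
          · subst h; exact le_max_right _ _
      filter_upwards [eventually_ge_atTop (⌈M⌉₊)] with k hk
      by_contra hφk
      push_neg at hφk
      have h1k : a (φ k) ≤ M := hM _ hφk
      have h2k : M ≤ (k:ℝ) := by
        have := Nat.ceil_le.mp hk
        exact_mod_cast this
      have h3k := hgt k
      linarith
    have htop : Tendsto (fun k => a (φ k)) atTop atTop :=
      tendsto_atTop_mono (fun k => (hgt k).le) tendsto_natCast_atTop_atTop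
    exact hnotop φ hφtop htop
  -- boundedness away from zero
  have hbddbelow : ∃ l : ℝ, 0 < l ∧ ∀ n, l ≤ a n := by
    by_contra hcon
    push_neg at hcon
    choose φf hφf using fun k : ℕ => hcon (1/((k:ℝ)+1)) (by positivity)
    have hφtop : Tendsto φf atTop atTop := by
      rw [tendsto_atTop]
      intro N
      obtain ⟨m, hm0, hm⟩ : ∃ m : ℝ, 0 < m ∧ ∀ n < N, m ≤ a n := by
        induction N with
        | zero => exact ⟨1, one_pos, fun n hn => absurd hn (Nat.not_lt_zero n)⟩
        | succ N ih =>
          obtain ⟨m, hm0, hm⟩ := ih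
          refine ⟨min m (a N), lt_min hm0 (ha N), fun n hn => ?_⟩
          rcases Nat.lt_succ_iff_lt_or_eq.mp hn with h | h
          · exact (min_le_left _ _).trans (hm n h)
          · subst h; exact min_le_right _ _
      filter_upwards [eventually_ge_atTop (⌈1/m⌉₊)] with k hk
      by_contra hφk
      push_neg at hφk
      have h1k : m ≤ a (φf k) := hm _ hφk
      have h2k : (1:ℝ)/m ≤ (k:ℝ) := by
        have := Nat.ceil_le.mp hk
        exact_mod_cast this
      have h3k : a (φf k) < 1/((k:ℝ)+1) := hφf k
      have h4 : 1/((k:ℝ)+1) < m := by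
        rw [div_lt_iff₀ (by positivity)]
        have h5 : 1 ≤ (k:ℝ) * m := (div_le_iff₀ hm0).mp h2k
        nlinarith
      linarith
    have h0 : Tendsto (fun k => a (φf k)) atTop (𝓝 0) := by
      refine squeeze_zero (fun k => (ha _).le) (fun k => (hφf k).le) ?_
      exact tendsto_one_div_add_atTop_nhds_zero_nat
    exact hnz2 φf hφtop h0
  obtain ⟨L, hL⟩ := hbddabove
  obtain ⟨l, hl0, hl⟩ := hbddbelow
  have hmem : ∀ n, a n ∈ Set.Icc l L := fun n => ⟨hl n, hL n⟩
  obtain ⟨a₀, ha₀mem, φ₀, hφ₀mono, hφ₀lim⟩ := isCompact_Icc.tendsto_subseq hmem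
  have ha₀pos : 0 < a₀ := lt_of_lt_of_le hl0 ha₀mem.1
  -- the key identification along subsequences
  have hKEY : ∀ (φ : ℕ → ℕ), Tendsto φ atTop atTop → ∀ {b : ℝ}, 0 < b →
      Tendsto (fun k => a (φ k)) atTop (𝓝 b) →
      ∀ f : 𝕏 →ᵇ ℝ, ∫ y, f y ∂(P.map ξt) = ∫ x, f (S.T b x) ∂(P.map ξ) := by
    intro φ hφ b hb hab f
    have hA : Tendsto (fun k => ∫ y, f y ∂(P.map (fun ω => S.T (a (φ k)) (ξn (φ k) ω))))
        atTop (𝓝 (∫ y, f y ∂(P.map ξt))) := (h2 f).comp hφ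
    have hB := SCTT.key S (fun k => P.map (ξn (φ k))) (P.map ξ)
      (fun f => (h1 f).comp hφ) (fun k => a (φ k)) (fun k => ha _) hb hab f
    have hEq : ∀ k, ∫ x, f (S.T (a (φ k)) x) ∂(P.map (ξn (φ k)))
        = ∫ y, f y ∂(P.map (fun ω => S.T (a (φ k)) (ξn (φ k) ω))) :=
      fun k => hswap (φ k) f (ha _)
    exact tendsto_nhds_unique hA (Tendsto.congr hEq hB)
  have hnzμ : P.map ξ {x | x ≠ z} ≠ 0 := by
    intro h0
    exact absurd (hpush ξ hξ h0) hz1.ne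
  have heq₀ := hKEY φ₀ hφ₀mono.tendsto_atTop ha₀pos hφ₀lim
  -- uniqueness of subsequential limits
  have huniq : ∀ {b : ℝ}, 0 < b →
      (∀ f : 𝕏 →ᵇ ℝ, ∫ y, f y ∂(P.map ξt) = ∫ x, f (S.T b x) ∂(P.map ξ)) → b = a₀ := by
    intro b hb hbeq
    rcases lt_trichotomy a₀ b with hltc | heqc | hgtc
    · exact absurd (SCTT.uniq_aux S (P.map ξ) hnzμ ha₀pos hltc
        (fun f => (heq₀ f).symm.trans (hbeq f))) not_false
    · exact heqc.symm
    · exact absurd (SCTT.uniq_aux S (P.map ξ) hnzμ hb hgtc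
        (fun f => (hbeq f).symm.trans (heq₀ f))) not_false
  refine ⟨a₀, ha₀pos, ?_, ?_⟩
  · -- convergence of the full sequence
    apply tendsto_of_subseq_tendsto
    intro ns hns
    obtain ⟨a₁, ha₁mem, ms, hmsmono, hmslim⟩ :=
      isCompact_Icc.tendsto_subseq (x := fun k => a (ns k)) (fun k => hmem _)
    have ha₁pos : 0 < a₁ := lt_of_lt_of_le hl0 ha₁mem.1
    have hcomp : Tendsto (ns ∘ ms) atTop atTop := hns.comp hmsmono.tendsto_atTop
    have heq₁ := hKEY (ns ∘ ms) hcomp ha₁pos hmslim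
    have : a₁ = a₀ := huniq ha₁pos heq₁
    exact ⟨ms, this ▸ hmslim⟩
  · -- identification of the limit law
    have hswap2 : ∀ f : 𝕏 →ᵇ ℝ, ∫ x, f (S.T a₀ x) ∂(P.map ξ)
        = ∫ y, f y ∂(P.map (fun ω => S.T a₀ (ξ ω))) := by
      intro f
      rw [integral_map (f := fun x => f (S.T a₀ x)) hξ.aemeasurable
          (((map_continuous f).comp (SCTT.contT S ha₀pos)).aestronglyMeasurable),
        integral_map (show AEMeasurable (fun ω => S.T a₀ (ξ ω)) P from
            ((hTmeas ha₀pos).comp hξ).aemeasurable)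
          ((map_continuous f).aestronglyMeasurable)]
    haveI : IsProbabilityMeasure (P.map (fun ω => S.T a₀ (ξ ω))) :=
      Measure.isProbabilityMeasure_map (((hTmeas ha₀pos).comp hξ).aemeasurable)
    exact SCTT.measure_eq_of_forall_integral_eq _ _ (fun f => (heq₀ f).trans (hswap2 f))
end

section
/- Let (𝕏, d) be a complete separable metric space with a distinguished point 0, equipped with a scaling action (T_a)_{a>0}. Let ξ be a non-zero random element of 𝕏 and a_n > 0 positive reals. If T_{a_n}(ξ) converges in distribution to the constant 0 (i.e., the laws of T_{a_n}(ξ) converge weakly to the Dirac measure at 0), then a_n → 0. -/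
open MeasureTheory Filter Topology

/-- If `ξ` is a non-zero random element and `T (a n) ξ` converges in distribution to the
Dirac measure at the distinguished point `z`, then `a n → 0`. -/
theorem scalingAction_tendsto_dirac_imp_scale_tendsto_zero {𝕏 : Type*} [MetricSpace 𝕏]
    [CompleteSpace 𝕏] [TopologicalSpace.SeparableSpace 𝕏] [MeasurableSpace 𝕏] [BorelSpace 𝕏]
    (z : 𝕏) (S : ScalingAction 𝕏 z)
    {Ω : Type*} [MeasurableSpace Ω] (P : Measure Ω) [IsProbabilityMeasure P]
    (ξ : Ω → 𝕏) (hξ : Measurable ξ) (hnz : P {ω | ξ ω = z} < 1)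
    (a : ℕ → ℝ) (ha : ∀ n, 0 < a n)
    (h : TendstoInDistribution P (fun n ω => S.T (a n) (ξ ω)) (Measure.dirac z)) :
    Tendsto a atTop (𝓝 0) := by
  -- continuity of T c for c > 0
  have contT : ∀ {c : ℝ}, 0 < c → Continuous (S.T c) := by
    intro c hc
    apply SeqContinuous.continuous
    intro xn x hx
    exact S.cont hc x (fun _ => c) xn tendsto_const_nhds hx
  -- positivity of dist (T c x) z for x ≠ z
  have hpos : ∀ {c : ℝ}, 0 < c → ∀ {x : 𝕏}, x ≠ z → 0 < dist (S.T c x) z := by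
    intro c hc x hx
    have h2 : (0:ℝ) < c/2 := by linarith
    have := S.mono h2 (by linarith : c/2 < c) hx
    exact lt_of_le_of_lt dist_nonneg this
  -- monotonicity (non-strict, all x)
  have hmono : ∀ {c b : ℝ}, 0 < c → c ≤ b → ∀ x : 𝕏,
      dist (S.T c x) z ≤ dist (S.T b x) z := by
    intro c b hc hcb x
    rcases eq_or_lt_of_le hcb with rfl | hlt
    · exact le_refl _
    · by_cases hx : x = z
      · subst hx
        rw [S.map_zero hc, S.map_zero (hc.trans hlt)]
      · exact (S.mono hc hlt hx).le
  by_contra hcon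
  rw [Metric.tendsto_atTop] at hcon
  push_neg at hcon
  obtain ⟨ε, hε, hfreq⟩ := hcon
  have hfreq' : ∀ N, ∃ n ≥ N, ε ≤ a n := by
    intro N
    obtain ⟨n, hn, hd⟩ := hfreq N
    refine ⟨n, hn, ?_⟩
    rw [Real.dist_eq, sub_zero, abs_of_pos (ha n)] at hd
    exact hd
  -- positive probability of ξ ≠ z
  have hzmeas : MeasurableSet {ω | ξ ω = z} := hξ (measurableSet_singleton z)
  have hPne : 0 < P {ω | ξ ω ≠ z} := by
    by_contra h0
    push_neg at h0
    have h0' : P {ω | ξ ω = z}ᶜ = 0 := by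
      have hset : {ω | ξ ω ≠ z} = {ω | ξ ω = z}ᶜ := by ext ω; simp
      rw [hset] at h0
      exact le_antisymm h0 zero_le
    exact absurd ((prob_compl_eq_zero_iff hzmeas).mp h0') hnz.ne
  -- events E m
  set E : ℕ → Set Ω := fun m => {ω | 1/((m:ℝ)+1) < dist (S.T ε (ξ ω)) z} with hE
  have hEmeas : ∀ m, MeasurableSet (E m) := by
    intro m
    have : Measurable fun ω => dist (S.T ε (ξ ω)) z :=
      (continuous_dist.comp (((contT hε).comp continuous_id).prodMk continuous_const)).measurable.comp hξ
    exact measurableSet_lt measurable_const this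
  have hUnion : {ω | ξ ω ≠ z} ⊆ ⋃ m, E m := by
    intro ω hω
    have hd : 0 < dist (S.T ε (ξ ω)) z := hpos hε hω
    obtain ⟨m, hm⟩ := exists_nat_one_div_lt hd
    exact Set.mem_iUnion.mpr ⟨m, hm⟩
  obtain ⟨m, hm⟩ : ∃ m, P (E m) ≠ 0 := by
    by_contra hall
    push_neg at hall
    have : P (⋃ m, E m) = 0 := measure_iUnion_null hall
    exact absurd (measure_mono_null hUnion this) hPne.ne'
  set δ : ℝ := 1/((m:ℝ)+1) with hδdef
  have hδ : 0 < δ := by positivity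
  set c : ENNReal := P (E m) with hc
  have hcfin : c ≠ ⊤ := (measure_lt_top P _).ne
  have hcr : 0 < c.toReal := ENNReal.toReal_pos hm hcfin
  -- bounded continuous test function
  set f0 : 𝕏 → ℝ := fun x => min (dist x z) δ with hf0
  have fcont : Continuous f0 := (continuous_id.dist continuous_const).min continuous_const
  have fbd : ∀ x y : 𝕏, dist (f0 x) (f0 y) ≤ δ := by
    intro x y
    have hx1 : 0 ≤ f0 x := le_min dist_nonneg hδ.le
    have hx2 : f0 x ≤ δ := min_le_right _ _
    have hy1 : 0 ≤ f0 y := le_min dist_nonneg hδ.le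
    have hy2 : f0 y ≤ δ := min_le_right _ _
    rw [Real.dist_eq, abs_sub_le_iff]
    constructor <;> linarith
  set f : BoundedContinuousFunction 𝕏 ℝ :=
    BoundedContinuousFunction.mkOfBound ⟨f0, fcont⟩ δ fbd with hf
  have hfz : ∫ x, f x ∂(Measure.dirac z) = 0 := by
    rw [MeasureTheory.integral_dirac]
    simp [hf, hf0, hδ.le]
  have hlim := h f
  rw [hfz] at hlim
  -- eventually small
  have hev : ∀ᶠ n in atTop, ∫ x, f x ∂(P.map (fun ω => S.T (a n) (ξ ω))) < δ * c.toReal := by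
    have := hlim.eventually (eventually_lt_nhds (by positivity : (0:ℝ) < δ * c.toReal))
    exact this
  obtain ⟨N, hN⟩ := eventually_atTop.mp hev
  obtain ⟨n, hn, hεa⟩ := hfreq' N
  have hsmall := hN n hn
  -- lower bound for integral
  set g : Ω → 𝕏 := fun ω => S.T (a n) (ξ ω) with hg
  have hgmeas : Measurable g := (contT (ha n)).measurable.comp hξ
  set μ : Measure 𝕏 := P.map g with hμ
  have : IsProbabilityMeasure μ := Measure.isProbabilityMeasure_map hgmeas.aemeasurable
  set A : Set 𝕏 := {x | δ ≤ dist x z} with hA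
  have hAmeas : MeasurableSet A :=
    measurableSet_le measurable_const (continuous_id.dist continuous_const).measurable
  have hsub : E m ⊆ g ⁻¹' A := by
    intro ω hω
    have h1 : δ < dist (S.T ε (ξ ω)) z := hω
    have h2 : dist (S.T ε (ξ ω)) z ≤ dist (S.T (a n) (ξ ω)) z := hmono hε hεa _
    exact le_of_lt (lt_of_lt_of_le h1 h2)
  have hμA : c ≤ μ A := by
    rw [hμ, Measure.map_apply hgmeas hAmeas]
    exact measure_mono hsub
  have hμAr : c.toReal ≤ (μ A).toReal :=
    ENNReal.toReal_mono (measure_lt_top μ _).ne hμA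
  have hint : Integrable (⇑f) μ := f.integrable μ
  have hfnn : 0 ≤ᶠ[ae μ] ⇑f := Filter.Eventually.of_forall
    (fun x => le_min dist_nonneg hδ.le)
  have hstep1 : ∫ x in A, f x ∂μ ≤ ∫ x, f x ∂μ :=
    setIntegral_le_integral hint hfnn
  have hstep2 : ∫ x in A, f x ∂μ = δ * (μ A).toReal := by
    have : ∀ x ∈ A, f x = δ := by
      intro x hx
      simp only [hf, hf0]
      exact min_eq_right hx
    rw [setIntegral_congr_fun hAmeas this, setIntegral_const]
    simp [mul_comm, Measure.real]
  have hlow : δ * c.toReal ≤ ∫ x, f x ∂μ := by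
    calc δ * c.toReal ≤ δ * (μ A).toReal := by nlinarith
    _ = ∫ x in A, f x ∂μ := hstep2.symm
    _ ≤ ∫ x, f x ∂μ := hstep1
  exact absurd hsmall (not_lt.mpr hlow)
end

section
/- Let V be a complex Hilbert space and H : V → V a bounded linear operator. For c > 0 write c^H := exp((log c)·H), the operator exponential of (log c)H. Assume: (a) every z in the spectrum of H satisfies Re(z) > 0; and (b) Re⟨Hx, x⟩ > 0 for every x ≠ 0. Then for every x ≠ 0 the function c ↦ ‖c^H x‖ is strictly increasing on (0, ∞), and ‖c^H x‖ → 0 as c → 0⁺. -/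
open Filter Topology NormedSpace

section Aux

variable {V : Type*} [NormedAddCommGroup V] [InnerProductSpace ℂ V] [CompleteSpace V]

lemma opAux_exp_apply_ne_zero (A : V →L[ℂ] V) {x : V} (hx : x ≠ 0) :
    exp A x ≠ 0 := by
  intro h
  let +nondep : NormedAlgebra ℚ (V →L[ℂ] V) := .restrictScalars ℚ ℂ _
  obtain ⟨u, hu⟩ := isUnit_exp A
  apply hx
  have h2 : (↑u⁻¹ * ↑u : V →L[ℂ] V) x = 0 := by
    rw [ContinuousLinearMap.mul_apply, hu, h, map_zero]
  rwa [u.inv_mul, ContinuousLinearMap.one_apply] at h2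

lemma opAux_hasDerivAt (H : V →L[ℂ] V) (x : V) (t : ℝ) :
    HasDerivAt (fun t : ℝ => exp ((t : ℂ) • H) x)
      (H (exp ((t : ℂ) • H) x)) t := by
  have h1 : HasDerivAt (fun z : ℂ => exp (z • H)) (H * exp ((t : ℂ) • H)) (t : ℂ) :=
    hasDerivAt_exp_smul_const' H (t : ℂ)
  have h2 : HasDerivAt (fun s : ℝ => exp ((s : ℂ) • H)) (H * exp ((t : ℂ) • H)) t := by
    have ha : HasFDerivAt (fun z : ℂ => exp (z • H))
        ((1 : ℂ →L[ℂ] ℂ).smulRight (H * exp ((t : ℂ) • H))) (t : ℂ) := h1.hasFDerivAt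
    have hb : HasFDerivAt (fun z : ℂ => exp (z • H))
        (((1 : ℂ →L[ℂ] ℂ).smulRight (H * exp ((t : ℂ) • H))).restrictScalars ℝ) (t : ℂ) :=
      ha.restrictScalars ℝ
    have hof : HasDerivAt (fun s : ℝ => (s : ℂ)) 1 t := by
      simpa using (hasDerivAt_id t).ofReal_comp
    have hc : HasDerivAt (fun s : ℝ => exp ((s : ℂ) • H))
        ((((1 : ℂ →L[ℂ] ℂ).smulRight (H * exp ((t : ℂ) • H))).restrictScalars ℝ) 1) t :=
      hb.comp_hasDerivAt t hof
    simpa using hc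
  have h3 : HasDerivAt (fun s : ℝ => exp ((s : ℂ) • H) x)
      ((ContinuousLinearMap.apply ℂ V x) (H * exp ((t : ℂ) • H))) t :=
    (((ContinuousLinearMap.apply ℂ V x)).restrictScalars ℝ).hasFDerivAt.comp_hasDerivAt t h2
  simpa [ContinuousLinearMap.mul_apply] using h3

lemma opAux_strictMono_norm (H : V →L[ℂ] V)
    (hpos : ∀ x : V, x ≠ 0 → 0 < (inner ℂ (H x) x : ℂ).re) {x : V} (hx : x ≠ 0) :
    StrictMono (fun t : ℝ => ‖exp ((t : ℂ) • H) x‖) := by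
  set F : ℝ → V := fun t => exp ((t : ℂ) • H) x with hF
  have hsq : StrictMono fun t : ℝ => ‖F t‖ ^ 2 := by
    apply strictMono_of_deriv_pos
    intro t
    have hFd := opAux_hasDerivAt H x t
    have hinner : HasDerivAt (fun t : ℝ => (inner ℂ (F t) (F t) : ℂ))
        (inner ℂ (F t) (H (F t)) + inner ℂ (H (F t)) (F t)) t := hFd.inner ℂ hFd
    have hre : HasDerivAt (fun t : ℝ => ‖F t‖ ^ 2)
        (2 * (inner ℂ (H (F t)) (F t) : ℂ).re) t := by
      have h4 := (Complex.reCLM.hasFDerivAt).comp_hasDerivAt t hinner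
      convert h4 using 1
      · rfl
      · rfl
      · funext s
        simp only [Function.comp, Complex.reCLM_apply]
        rw [← inner_self_eq_norm_sq (𝕜 := ℂ)]
        simp [RCLike.re_to_complex]
      · simp only [Complex.reCLM_apply, Complex.add_re]
        rw [← inner_conj_symm (H (F t)) (F t), Complex.conj_re]
        ring
    rw [hre.deriv]
    have hne : F t ≠ 0 := opAux_exp_apply_ne_zero _ hx
    have := hpos (F t) hne
    linarith
  intro s t hst
  exact lt_of_pow_lt_pow_left₀ 2 (norm_nonneg _) (hsq hst)

end Aux

section Spectral

set_option maxHeartbeats 1000000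

variable {V : Type*} [NormedAddCommGroup V] [InnerProductSpace ℂ V] [CompleteSpace V]

lemma opAux_spectral_bound (H : V →L[ℂ] V) [Nontrivial V]
    (hspec : ∀ z ∈ spectrum ℂ H, 0 < z.re) :
    ∃ δ : ℝ, 0 < δ ∧ ∀ μ ∈ spectrum ℂ (exp (-H)), ‖μ‖ ≤ Real.exp (-δ) := by
  haveI : Nontrivial (V →L[ℂ] V) := ⟨1, 0, fun h => by
    obtain ⟨v, hv⟩ := exists_ne (0 : V)
    exact hv (by simpa using DFunLike.congr_fun h v)⟩
  set S := Algebra.elemental ℂ H with hS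
  letI : NormedCommRing S := { (inferInstance : NormedRing S) with mul_comm := mul_comm }
  let +nondep : NormedAlgebra ℚ (V →L[ℂ] V) := .restrictScalars ℚ ℂ _
  let +nondep : NormedAlgebra ℚ S := .restrictScalars ℚ ℂ S
  haveI : Nontrivial S := ⟨1, 0, fun h => (one_ne_zero (α := V →L[ℂ] V))
    (by simpa using congrArg Subtype.val h)⟩
  set a' : S := ⟨H, Algebra.elemental.self_mem ℂ H⟩ with ha'
  obtain ⟨z₀, hz₀mem, hz₀min⟩ := (spectrum.isCompact (a := a')).exists_isMinOn
    (spectrum.nonempty a') Complex.continuous_re.continuousOn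
  have hz₀front : z₀ ∈ frontier (spectrum ℂ a') := by
    rw [frontier_eq_closure_inter_closure, (spectrum.isClosed _).closure_eq]
    refine ⟨hz₀mem, ?_⟩
    rw [Metric.mem_closure_iff]
    intro ε hε
    refine ⟨z₀ - (ε / 2 : ℝ), fun hmem => ?_, ?_⟩
    · have h1 := isMinOn_iff.mp hz₀min _ hmem
      simp only [Complex.sub_re, Complex.ofReal_re] at h1
      linarith
    · have : dist z₀ (z₀ - (ε / 2 : ℝ)) = ε / 2 := by
        rw [dist_eq_norm]
        simp [abs_of_nonneg hε.le]
      rw [this]; linarith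
  have hz₀B : z₀ ∈ spectrum ℂ H := Subalgebra.frontier_spectrum S a' hz₀front
  refine ⟨z₀.re, hspec _ hz₀B, ?_⟩
  intro μ hμ
  have hval : ((exp (-a') : S) : V →L[ℂ] V) = exp (-H) := by
    have h1 := map_exp (Subalgebra.val S) continuous_subtype_val (-a')
    simpa using h1
  have hμS : μ ∈ spectrum ℂ (exp (-a')) := by
    apply spectrum.subset_subalgebra (exp (-a'))
    rw [hval]; exact hμ
  obtain ⟨χ, hχ⟩ := WeakDual.CharacterSpace.mem_spectrum_iff_exists.mp hμS
  have hz : χ a' ∈ spectrum ℂ a' := AlgHom.apply_mem_spectrum χ a'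
  have hμeq : μ = Complex.exp (-(χ a')) := by
    rw [← hχ, map_exp χ (map_continuous χ), map_neg, Complex.exp_eq_exp_ℂ]
  rw [hμeq, Complex.norm_exp]
  simp only [Complex.neg_re]
  exact Real.exp_le_exp.mpr (neg_le_neg (isMinOn_iff.mp hz₀min _ hz))

end Spectral

section Decay

variable {V : Type*} [NormedAddCommGroup V] [InnerProductSpace ℂ V] [CompleteSpace V]

lemma opAux_tendsto_pow (H : V →L[ℂ] V) [Nontrivial V]
    (hspec : ∀ z ∈ spectrum ℂ H, 0 < z.re) :
    Tendsto (fun n : ℕ => ‖(exp (-H)) ^ n‖) atTop (𝓝 0) := by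
  obtain ⟨δ, hδ, hb⟩ := opAux_spectral_bound H hspec
  set a := exp (-H) with ha
  set q : ℝ := Real.exp (-(δ / 2)) with hq
  have hq0 : 0 < q := Real.exp_pos _
  have hq1 : q < 1 := by
    rw [hq, Real.exp_lt_one_iff]
    linarith
  have hrad : spectralRadius ℂ a < ENNReal.ofReal q := by
    have h1 : ∀ μ ∈ spectrum ℂ a, ‖μ‖₊ < q.toNNReal := by
      intro μ hμ
      have h2 : ‖μ‖ < q := lt_of_le_of_lt (hb μ hμ)
        (Real.exp_lt_exp.mpr (by linarith))
      rw [← norm_toNNReal]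
      exact (Real.toNNReal_lt_toNNReal_iff hq0).mpr h2
    have h3 := spectrum.spectralRadius_lt_of_forall_lt a h1
    rwa [ENNReal.ofReal] 
  have gel := spectrum.pow_norm_pow_one_div_tendsto_nhds_spectralRadius a
  have hev : ∀ᶠ n : ℕ in atTop,
      ENNReal.ofReal (‖a ^ n‖ ^ (1 / (n : ℝ))) < ENNReal.ofReal q :=
    gel.eventually_lt_const hrad
  have hbound : ∀ᶠ n : ℕ in atTop, ‖a ^ n‖ ≤ q ^ n := by
    filter_upwards [hev, eventually_ge_atTop 1] with n hn hn1
    have hn0 : (n : ℝ) ≠ 0 := by positivity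
    have hq' : ‖a ^ n‖ ^ (1 / (n : ℝ)) < q := by
      rwa [ENNReal.ofReal_lt_ofReal_iff hq0] at hn
    have hcalc : ‖a ^ n‖ = (‖a ^ n‖ ^ (1 / (n : ℝ))) ^ (n : ℝ) := by
      rw [← Real.rpow_mul (norm_nonneg _), one_div_mul_cancel hn0, Real.rpow_one]
    calc ‖a ^ n‖ = (‖a ^ n‖ ^ (1 / (n : ℝ))) ^ (n : ℝ) := hcalc
      _ ≤ q ^ (n : ℝ) := Real.rpow_le_rpow (by positivity) hq'.le (by positivity)
      _ = q ^ n := Real.rpow_natCast q n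
  have hqt : Tendsto (fun n : ℕ => q ^ n) atTop (𝓝 0) :=
    tendsto_pow_atTop_nhds_zero_of_lt_one hq0.le hq1
  exact squeeze_zero' (Eventually.of_forall fun n => norm_nonneg _) hbound hqt

end Decay

/-- Let `H` be a bounded linear operator on a complex Hilbert space `V` with
`Re z > 0` for every `z` in the spectrum of `H`, and `Re ⟪H x, x⟫ > 0` for every `x ≠ 0`.
Writing `c ^ H := exp ((log c) • H)` for `c > 0`, the map `c ↦ ‖c ^ H x‖` is strictly
increasing on `(0, ∞)` and tends to `0` as `c → 0⁺`, for every `x ≠ 0`. -/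
theorem operator_scaling_norm_strictMono_and_tendsto_zero
    {V : Type*} [NormedAddCommGroup V] [InnerProductSpace ℂ V] [CompleteSpace V]
    (H : V →L[ℂ] V)
    (hspec : ∀ z ∈ spectrum ℂ H, 0 < z.re)
    (hpos : ∀ x : V, x ≠ 0 → 0 < (inner ℂ (H x) x : ℂ).re) :
    ∀ x : V, x ≠ 0 →
      StrictMonoOn (fun c : ℝ => ‖(NormedSpace.exp ((Real.log c : ℂ) • H)) x‖)
        (Set.Ioi (0 : ℝ)) ∧
      Tendsto (fun c : ℝ => ‖(NormedSpace.exp ((Real.log c : ℂ) • H)) x‖)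
        (𝓝[>] (0 : ℝ)) (𝓝 0) := by
  intro x hx
  haveI : Nontrivial V := nontrivial_of_ne x 0 hx
  have hmono : StrictMono (fun t : ℝ => ‖exp ((t : ℂ) • H) x‖) :=
    opAux_strictMono_norm H hpos hx
  constructor
  · intro c₁ h₁ c₂ h₂ hlt
    exact hmono (Real.log_lt_log (Set.mem_Ioi.mp h₁) hlt)
  · have h1 : Tendsto (fun t : ℝ => ‖exp ((t : ℂ) • H) x‖) atBot (𝓝 0) := by
      rw [Metric.tendsto_nhds]
      intro ε hε
      have hpow := opAux_tendsto_pow H hspec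
      have hx1 : (0 : ℝ) < ε / (‖x‖ + 1) := by positivity
      obtain ⟨N, hN⟩ := Metric.tendsto_atTop.mp hpow (ε / (‖x‖ + 1)) hx1
      have hNb : ‖(exp (-H)) ^ N‖ < ε / (‖x‖ + 1) := by
        have h2 := hN N le_rfl
        rwa [Real.dist_0_eq_abs, abs_of_nonneg (norm_nonneg _)] at h2
      have hFN : exp (((-(N : ℝ) : ℝ) : ℂ) • H) = (exp (-H)) ^ N := by
        have hsm : ((-(N : ℝ) : ℝ) : ℂ) • H = (N : ℕ) • (-H) := by
          have hcast : ((-(N : ℝ) : ℝ) : ℂ) = -(N : ℂ) := by push_cast; ring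
          rw [hcast, neg_smul, ← smul_neg, ← Nat.cast_smul_eq_nsmul ℂ N (-H)]
        let +nondep : NormedAlgebra ℚ (V →L[ℂ] V) := .restrictScalars ℚ ℂ _
        rw [hsm, exp_nsmul]
      filter_upwards [eventually_le_atBot (-(N : ℝ))] with t ht
      rw [Real.dist_0_eq_abs, abs_of_nonneg (norm_nonneg _)]
      have hle : ‖exp ((t : ℂ) • H) x‖ ≤ ‖exp (((-(N : ℝ) : ℝ) : ℂ) • H) x‖ := by
        rcases eq_or_lt_of_le ht with h | h
        · rw [h]
        · exact (hmono h).le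
      have hle2 : ‖exp (((-(N : ℝ) : ℝ) : ℂ) • H) x‖ ≤ ‖(exp (-H)) ^ N‖ * ‖x‖ := by
        rw [hFN]
        exact ContinuousLinearMap.le_opNorm _ x
      have hx2 : ‖x‖ < ‖x‖ + 1 := by linarith
      calc ‖exp ((t : ℂ) • H) x‖ ≤ ‖(exp (-H)) ^ N‖ * ‖x‖ := hle.trans hle2
        _ < ε := by
            rcases eq_or_lt_of_le (norm_nonneg ((exp (-H)) ^ N)) with h | h
            · rw [← h]; simpa using hε
            · calc ‖(exp (-H)) ^ N‖ * ‖x‖ < (ε / (‖x‖ + 1)) * (‖x‖ + 1) := by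
                    apply mul_lt_mul' hNb.le hx2 (norm_nonneg x) hx1
                _ = ε := by field_simp
    have h2 := h1.comp Real.tendsto_log_nhdsGT_zero
    simpa [Function.comp_def] using h2
end

section
/- (Zero-one law for squared Gaussian sums.) Let (Z_j)_{j∈ℕ} be real random variables on a probability space that are jointly centered Gaussian, with σ_j² := E[Z_j²]. Let ξ := Σ_{j∈ℕ} Z_j², a random variable with values in [0, ∞]. Then the following are equivalent: (i) Σ_{j∈ℕ} σ_j² < ∞; (ii) P(ξ < ∞) = 1; (iii) P(ξ < ∞) > 0. -/
open MeasureTheory ProbabilityTheory Filter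
open scoped ENNReal NNReal

/-- The family `Z` is jointly centered Gaussian: every finite real linear combination is a
centered (possibly degenerate) Gaussian random variable. -/
def IsJointlyCenteredGaussian {Ω : Type*} [MeasurableSpace Ω] (P : Measure Ω)
    (Z : ℕ → Ω → ℝ) : Prop :=
  ∀ (s : Finset ℕ) (c : ℕ → ℝ), ∃ v : ℝ≥0,
    P.map (fun ω => ∑ j ∈ s, c j * Z j ω) = gaussianReal 0 v

open Real Topology

lemma gauss_laplace (v : ℝ≥0) {c : ℝ} (hc : 0 < c) :
    ∫⁻ x, ENNReal.ofReal (Real.exp (-(c * x ^ 2))) ∂(gaussianReal 0 v)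
      = ENNReal.ofReal ((Real.sqrt (1 + 2 * c * v))⁻¹) := by
  have hmg : Measurable fun x : ℝ => ENNReal.ofReal (Real.exp (-(c * x ^ 2))) := by
    fun_prop
  by_cases hv : v = 0
  · subst hv
    rw [gaussianReal_zero_var, lintegral_dirac' _ hmg]
    simp
  · have hv' : (0:ℝ) < (v:ℝ) := by positivity
    have hvne : (v:ℝ) ≠ 0 := hv'.ne'
    set b : ℝ := c + (2 * (v:ℝ))⁻¹ with hb
    have hbpos : 0 < b := by positivity
    have hbne : b ≠ 0 := hbpos.ne'
    have hint : Integrable (fun x : ℝ => (Real.sqrt (2 * Real.pi * v))⁻¹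
        * Real.exp (-(b * x ^ 2))) := by
      simpa [neg_mul] using
        (integrable_exp_neg_mul_sq hbpos).const_mul ((Real.sqrt (2 * Real.pi * v))⁻¹)
    rw [gaussianReal_of_var_ne_zero _ hv,
      lintegral_withDensity_eq_lintegral_mul _ (measurable_gaussianPDF _ _) hmg]
    have heq : ∀ x : ℝ, (gaussianPDF 0 v * fun x => ENNReal.ofReal (Real.exp (-(c * x ^ 2)))) x
        = ENNReal.ofReal ((Real.sqrt (2 * Real.pi * v))⁻¹ * Real.exp (-(b * x ^ 2))) := by
      intro x
      simp only [Pi.mul_apply, gaussianPDF, gaussianPDFReal, ← ENNReal.ofReal_mul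
        (by positivity : (0:ℝ) ≤ (Real.sqrt (2 * Real.pi * v))⁻¹ * Real.exp (-(x - 0)^2 / (2*v)))]
      congr 1
      rw [mul_assoc, ← Real.exp_add]
      congr 1
      rw [hb]
      field_simp
      ring
    simp only [heq]
    rw [← ofReal_integral_eq_lintegral_ofReal hint (by filter_upwards with x; positivity)]
    rw [integral_const_mul]
    simp_rw [← neg_mul]
    rw [integral_gaussian]
    congr 1
    rw [← Real.sqrt_inv, ← Real.sqrt_inv, ← Real.sqrt_mul (by positivity)]
    congr 1
    rw [hb]
    field_simp
    ring

-- real inequality : K * (1 - (√(1+2v/K))⁻¹) ≤ v for K > 0, v ≥ 0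
lemma real_key {K v : ℝ} (hK : 0 < K) (hv : 0 ≤ v) :
    K * (1 - (Real.sqrt (1 + 2 * K⁻¹ * v))⁻¹) ≤ v := by
  set t : ℝ := 2 * K⁻¹ * v with ht
  have ht0 : 0 ≤ t := by positivity
  have hs : Real.sqrt (1 + t) ^ 2 = 1 + t := Real.sq_sqrt (by linarith)
  have hs0 : 0 < Real.sqrt (1 + t) := Real.sqrt_pos.2 (by linarith)
  have key : 1 - (Real.sqrt (1 + t))⁻¹ ≤ t / 2 := by
    rcases le_or_gt 2 t with h | h
    · have : 0 < (Real.sqrt (1 + t))⁻¹ := by positivity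
      linarith
    · have hmul : (1 - t / 2) * Real.sqrt (1 + t) ≤ 1 := by
        nlinarith [hs, hs0.le, sq_nonneg (Real.sqrt (1 + t) - 1),
          mul_nonneg (sq_nonneg (Real.sqrt (1 + t) - 1)) (by linarith [hs0.le] : (0:ℝ) ≤ Real.sqrt (1 + t) + 2)]
      have : 1 - t / 2 ≤ (Real.sqrt (1 + t))⁻¹ := by
        rw [inv_eq_one_div, le_div_iff₀ hs0]
        exact hmul
      linarith
  have : K * (t / 2) = v := by rw [ht]; linear_combination v * (mul_inv_cancel₀ hK.ne')
  nlinarith [key, hK.le]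

set_option maxHeartbeats 1000000 in
lemma gauss_sq_le (v : ℝ≥0) :
    ∫⁻ x, ENNReal.ofReal (x ^ 2) ∂(gaussianReal 0 v) ≤ (v : ℝ≥0∞) := by
  set μ := gaussianReal 0 v with hμ
  have : IsProbabilityMeasure μ := by rw [hμ]; infer_instance
  set f : ℕ → ℝ → ℝ≥0∞ := fun n x =>
    ENNReal.ofReal (((n : ℝ) + 1) * (1 - Real.exp (-(((n : ℝ) + 1)⁻¹ * x ^ 2)))) with hf
  have hfm : ∀ n, Measurable (f n) := by intro n; fun_prop
  have hKpos : ∀ n : ℕ, (0:ℝ) < (n : ℝ) + 1 := fun n => by positivity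
  -- pointwise limit
  have hlim : ∀ x : ℝ, Tendsto (fun n => f n x) atTop (𝓝 (ENNReal.ofReal (x ^ 2))) := by
    intro x
    set a : ℝ := x ^ 2 with ha
    have ha0 : 0 ≤ a := sq_nonneg x
    have hreal : Tendsto (fun n : ℕ => ((n : ℝ) + 1) * (1 - Real.exp (-(((n : ℝ) + 1)⁻¹ * a))))
        atTop (𝓝 a) := by
      have t0 : Tendsto (fun n : ℕ => a * ((n : ℝ) + 1)⁻¹) atTop (𝓝 0) := by
        simpa [one_div] using tendsto_one_div_add_atTop_nhds_zero_nat.const_mul a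
      have tlow : Tendsto (fun n : ℕ => a * (1 + a * ((n : ℝ) + 1)⁻¹)⁻¹) atTop (𝓝 a) := by
        have hne : (1:ℝ) + 0 ≠ 0 := by norm_num
        have := ((tendsto_const_nhds.add t0).inv₀ hne).const_mul a
        simpa using this
      refine tendsto_of_tendsto_of_tendsto_of_le_of_le tlow tendsto_const_nhds ?_ ?_
      · intro n
        show a * (1 + a * ((n:ℝ)+1)⁻¹)⁻¹ ≤ ((n:ℝ)+1) * (1 - Real.exp (-(((n:ℝ)+1)⁻¹ * a)))
        rw [mul_comm a (((n:ℝ)+1)⁻¹)]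
        set K : ℝ := (n : ℝ) + 1 with hKdef
        have hK : 0 < K := hKpos n
        set u : ℝ := K⁻¹ * a with hu
        have hu0 : 0 ≤ u := by positivity
        have hKu : K * u = a := by rw [hu, ← mul_assoc, mul_inv_cancel₀ hK.ne', one_mul]
        have h1u : (0:ℝ) < 1 + u := by linarith
        have he : Real.exp (-u) ≤ (1 + u)⁻¹ := by
          rw [Real.exp_neg]
          exact inv_anti₀ (by linarith) (by linarith [Real.add_one_le_exp u])
        have key : 1 - (1 + u)⁻¹ = u * (1 + u)⁻¹ := by field_simp; ring
        calc a * (1 + u)⁻¹ = K * (u * (1 + u)⁻¹) := by rw [← hKu]; ring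
          _ = K * (1 - (1 + u)⁻¹) := by rw [key]
          _ ≤ K * (1 - Real.exp (-u)) := by
              apply mul_le_mul_of_nonneg_left (by linarith) hK.le
      · intro n
        show ((n:ℝ)+1) * (1 - Real.exp (-(((n:ℝ)+1)⁻¹ * a))) ≤ a
        set K : ℝ := (n : ℝ) + 1 with hKdef
        have hK : 0 < K := hKpos n
        set u : ℝ := K⁻¹ * a with hu
        have hu0 : 0 ≤ u := by positivity
        have hKu : K * u = a := by rw [hu, ← mul_assoc, mul_inv_cancel₀ hK.ne', one_mul]
        have h2 : 1 - u ≤ Real.exp (-u) := by linarith [Real.add_one_le_exp (-u)]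
        calc K * (1 - Real.exp (-u)) ≤ K * u := mul_le_mul_of_nonneg_left (by linarith) hK.le
          _ = a := hKu
    exact ENNReal.tendsto_ofReal hreal
  -- each integral bounded by v
  have hbound : ∀ n : ℕ, ∫⁻ x, f n x ∂μ ≤ (v : ℝ≥0∞) := by
    intro n
    set K : ℝ := (n : ℝ) + 1 with hKdef
    have hK : 0 < K := hKpos n
    have hcinv : (0:ℝ) < K⁻¹ := by positivity
    set g : ℝ → ℝ≥0∞ := fun x => ENNReal.ofReal (Real.exp (-(K⁻¹ * x ^ 2))) with hg
    have hgm : Measurable g := by fun_prop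
    have hgle : ∀ x, g x ≤ 1 := by
      intro x
      rw [hg, ← ENNReal.ofReal_one]
      apply ENNReal.ofReal_le_ofReal
      exact Real.exp_le_one_iff.2 (neg_nonpos.2 (by positivity))
    have hgint : ∫⁻ x, g x ∂μ = ENNReal.ofReal ((Real.sqrt (1 + 2 * K⁻¹ * v))⁻¹) :=
      gauss_laplace v hcinv
    have hfg : ∀ x, f n x = ENNReal.ofReal K * (1 - g x) := by
      intro x
      rw [hf, hg]
      simp only []
      rw [ENNReal.ofReal_mul hK.le]
      congr 1
      rw [ENNReal.ofReal_sub _ (Real.exp_nonneg _), ENNReal.ofReal_one]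
    simp only [hfg]
    rw [lintegral_const_mul _ (f := fun x => 1 - g x) (by fun_prop)]
    have hgfin : ∫⁻ x, g x ∂μ ≠ ⊤ := by rw [hgint]; exact ENNReal.ofReal_ne_top
    rw [lintegral_sub hgm hgfin (Filter.Eventually.of_forall hgle)]
    rw [lintegral_one, measure_univ, hgint]
    set r : ℝ := (Real.sqrt (1 + 2 * K⁻¹ * v))⁻¹ with hr
    have hr0 : 0 ≤ r := by positivity
    rw [← ENNReal.ofReal_one, ← ENNReal.ofReal_sub _ hr0,
      ← ENNReal.ofReal_mul hK.le, ← ENNReal.ofReal_coe_nnreal]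
    exact ENNReal.ofReal_le_ofReal (real_key hK v.coe_nonneg)
  -- Fatou
  calc ∫⁻ x, ENNReal.ofReal (x ^ 2) ∂μ
      = ∫⁻ x, liminf (fun n => f n x) atTop ∂μ := by
        refine lintegral_congr fun x => ?_
        exact ((hlim x).liminf_eq).symm
    _ ≤ liminf (fun n => ∫⁻ x, f n x ∂μ) atTop := lintegral_liminf_le hfm
    _ ≤ liminf (fun _ : ℕ => (v : ℝ≥0∞)) atTop := by
        exact liminf_le_liminf (Filter.Eventually.of_forall hbound)
    _ = (v : ℝ≥0∞) := liminf_const _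

lemma prod_rpow_const {a : ℝ≥0∞} (ha : a ≠ 0) (ha' : a ≠ ⊤) (s : Finset ℕ) (w : ℕ → ℝ) :
    ∏ j ∈ s, a ^ w j = a ^ (∑ j ∈ s, w j) := by
  classical
  induction s using Finset.induction with
  | empty => simp
  | insert _ _ hj ih =>
    rw [Finset.prod_insert hj, Finset.sum_insert hj, ih, ENNReal.rpow_add _ _ ha ha']

lemma holder_bound {Ω : Type*} [MeasurableSpace Ω] (P : Measure Ω) [IsProbabilityMeasure P]
    (Z : ℕ → Ω → ℝ) (hmeas : ∀ j, Measurable (Z j)) (v : ℕ → ℝ≥0)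
    (hmap : ∀ j, P.map (Z j) = gaussianReal 0 (v j))
    (s : Finset ℕ) (hs : ∀ j ∈ s, v j ≠ 0) :
    ∫⁻ ω, ∏ j ∈ s, ENNReal.ofReal (Real.exp (-(Z j ω) ^ 2)) ∂P
      ≤ ENNReal.ofReal ((Real.sqrt (1 + 2 * ∑ j ∈ s, (v j : ℝ)))⁻¹) := by
  rcases Finset.eq_empty_or_nonempty s with rfl | hne
  · simp
  set t : ℝ := ∑ j ∈ s, (v j : ℝ) with htdef
  have ht : 0 < t := Finset.sum_pos (fun j hj => by
    have := hs j hj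
    positivity) hne
  set w : ℕ → ℝ := fun j => (v j : ℝ) / t with hwdef
  have hw0 : ∀ j ∈ s, 0 ≤ w j := fun j _ => by positivity
  have hw1 : ∑ j ∈ s, w j = 1 := by
    rw [hwdef]
    simp only []
    rw [← Finset.sum_div, ← htdef, div_self ht.ne']
  set f : ℕ → Ω → ℝ≥0∞ := fun j ω =>
    ENNReal.ofReal (Real.exp (-((t / (v j : ℝ)) * (Z j ω) ^ 2))) with hfdef
  have hfm : ∀ j ∈ s, AEMeasurable (f j) P := fun j _ => (by fun_prop : Measurable (f j)).aemeasurable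
  have hfw : ∀ ω, ∀ j ∈ s, f j ω ^ w j = ENNReal.ofReal (Real.exp (-(Z j ω) ^ 2)) := by
    intro ω j hj
    have hvj : (0:ℝ) < (v j : ℝ) := by have := hs j hj; positivity
    rw [hfdef]
    simp only []
    rw [ENNReal.ofReal_rpow_of_pos (Real.exp_pos _), ← Real.exp_mul]
    congr 2
    rw [hwdef]
    simp only []
    field_simp
  have hstep : ∫⁻ ω, ∏ j ∈ s, ENNReal.ofReal (Real.exp (-(Z j ω) ^ 2)) ∂P
      = ∫⁻ ω, ∏ j ∈ s, f j ω ^ w j ∂P := by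
    refine lintegral_congr fun ω => ?_
    exact (Finset.prod_congr rfl (hfw ω)).symm
  rw [hstep]
  have hholder := ENNReal.lintegral_prod_norm_pow_le s hfm hw1 hw0
  refine hholder.trans ?_
  have hfint : ∀ j ∈ s, ∫⁻ ω, f j ω ∂P = ENNReal.ofReal ((Real.sqrt (1 + 2 * t))⁻¹) := by
    intro j hj
    have hvj : (0:ℝ) < (v j : ℝ) := by have := hs j hj; positivity
    have hc : (0:ℝ) < t / (v j : ℝ) := by positivity
    rw [hfdef]
    simp only []
    calc ∫⁻ ω, ENNReal.ofReal (Real.exp (-(t / (v j : ℝ) * Z j ω ^ 2))) ∂P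
        = ∫⁻ x, ENNReal.ofReal (Real.exp (-(t / (v j : ℝ) * x ^ 2))) ∂(P.map (Z j)) :=
          (lintegral_map (f := fun x => ENNReal.ofReal (Real.exp (-(t / (v j : ℝ) * x ^ 2)))) (by fun_prop) (hmeas j)).symm
      _ = ENNReal.ofReal ((Real.sqrt (1 + 2 * t))⁻¹) := by
          rw [hmap j, gauss_laplace _ hc]
          congr 3
          field_simp
  have hr : (0:ℝ) < (Real.sqrt (1 + 2 * t))⁻¹ := by
    have h2t : (0:ℝ) < 1 + 2 * t := by linarith
    exact inv_pos.2 (Real.sqrt_pos.2 h2t)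
  calc ∏ j ∈ s, (∫⁻ ω, f j ω ∂P) ^ w j
      = ∏ j ∈ s, (ENNReal.ofReal ((Real.sqrt (1 + 2 * t))⁻¹)) ^ w j :=
        Finset.prod_congr rfl (fun j hj => by rw [hfint j hj])
    _ = (ENNReal.ofReal ((Real.sqrt (1 + 2 * t))⁻¹)) ^ (∑ j ∈ s, w j) :=
        prod_rpow_const (ENNReal.ofReal_pos.2 hr).ne' ENNReal.ofReal_ne_top s w
    _ = ENNReal.ofReal ((Real.sqrt (1 + 2 * t))⁻¹) := by rw [hw1, ENNReal.rpow_one]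
    _ ≤ ENNReal.ofReal ((Real.sqrt (1 + 2 * t))⁻¹) := le_rfl

/-- Zero-one law for squared Gaussian sums: for a jointly centered Gaussian family `(Z j)`
with `σ j ^ 2 = E[Z j ^ 2]` and `ξ = Σ_j Z j ^ 2 ∈ [0,∞]`, the conditions
(i) `Σ_j σ j ^ 2 < ∞`, (ii) `P(ξ < ∞) = 1` and (iii) `P(ξ < ∞) > 0` are equivalent. -/
theorem gaussian_squared_sum_zero_one_law {Ω : Type*} [MeasurableSpace Ω]
    (P : Measure Ω) [IsProbabilityMeasure P]
    (Z : ℕ → Ω → ℝ) (hmeas : ∀ j, Measurable (Z j))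
    (hgauss : IsJointlyCenteredGaussian P Z) :
    ((∑' j, ∫⁻ ω, ENNReal.ofReal ((Z j ω) ^ 2) ∂P) < ⊤ ↔
        P {ω | (∑' j, ENNReal.ofReal ((Z j ω) ^ 2)) < ⊤} = 1) ∧
      (P {ω | (∑' j, ENNReal.ofReal ((Z j ω) ^ 2)) < ⊤} = 1 ↔
        0 < P {ω | (∑' j, ENNReal.ofReal ((Z j ω) ^ 2)) < ⊤}) := by
  -- marginal laws
  have hv : ∀ j, ∃ w : ℝ≥0, P.map (Z j) = gaussianReal 0 w := by
    intro j
    obtain ⟨w, hw⟩ := hgauss {j} (fun _ => 1)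
    refine ⟨w, ?_⟩
    rw [← hw]
    congr 1
    funext ω
    simp
  choose v hmap using hv
  have hmξ : Measurable (fun ω => ∑' j, ENNReal.ofReal ((Z j ω) ^ 2)) :=
    Measurable.ennreal_tsum (fun j => by fun_prop)
  have hmsetξ : MeasurableSet {ω | (∑' j, ENNReal.ofReal ((Z j ω) ^ 2)) < ⊤} :=
    measurableSet_lt hmξ measurable_const
  -- (i) → (ii)
  have h12 : (∑' j, ∫⁻ ω, ENNReal.ofReal ((Z j ω) ^ 2) ∂P) < ⊤ →
      P {ω | (∑' j, ENNReal.ofReal ((Z j ω) ^ 2)) < ⊤} = 1 := by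
    intro h
    have hint : ∫⁻ ω, (∑' j, ENNReal.ofReal ((Z j ω) ^ 2)) ∂P < ⊤ := by
      rw [lintegral_tsum (fun j => (by fun_prop : Measurable
        (fun ω => ENNReal.ofReal ((Z j ω) ^ 2))).aemeasurable)]
      exact h
    have hae := ae_lt_top hmξ hint.ne
    rw [← prob_compl_eq_zero_iff hmsetξ]
    rw [ae_iff] at hae
    rw [Set.compl_setOf]
    exact hae
  -- (iii) → (i)
  have h31 : 0 < P {ω | (∑' j, ENNReal.ofReal ((Z j ω) ^ 2)) < ⊤} →
      (∑' j, ∫⁻ ω, ENNReal.ofReal ((Z j ω) ^ 2) ∂P) < ⊤ := by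
    intro h
    -- find a level n with positive probability
    have hsub : {ω | (∑' j, ENNReal.ofReal ((Z j ω) ^ 2)) < ⊤}
        ⊆ ⋃ n : ℕ, {ω | (∑' j, ENNReal.ofReal ((Z j ω) ^ 2)) ≤ (n : ℝ≥0∞)} := by
      intro ω hω
      obtain ⟨n, hn⟩ := ENNReal.exists_nat_gt (LT.lt.ne hω)
      exact Set.mem_iUnion.2 ⟨n, hn.le⟩
    have hex : ∃ n : ℕ, P {ω | (∑' j, ENNReal.ofReal ((Z j ω) ^ 2)) ≤ (n : ℝ≥0∞)} ≠ 0 := by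
      by_contra hcon
      push_neg at hcon
      have h0 : P (⋃ n : ℕ, {ω | (∑' j, ENNReal.ofReal ((Z j ω) ^ 2)) ≤ (n : ℝ≥0∞)}) = 0 :=
        measure_iUnion_null hcon
      exact absurd ((measure_mono hsub).trans_eq h0) (not_le.2 h)
    obtain ⟨n, hn⟩ := hex
    set A : Set Ω := {ω | (∑' j, ENNReal.ofReal ((Z j ω) ^ 2)) ≤ (n : ℝ≥0∞)} with hA
    set ε : ℝ≥0∞ := P A with hε
    have hε0 : 0 < ε := pos_iff_ne_zero.2 hn
    have hεtop : ε ≠ ⊤ := (measure_lt_top P A).ne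
    set δ : ℝ := (ENNReal.ofReal (Real.exp (-(n : ℝ))) * ε).toReal with hδ
    have hδ0 : 0 < δ := by
      rw [hδ]
      apply ENNReal.toReal_pos
      · exact (ENNReal.mul_pos (ENNReal.ofReal_pos.2 (Real.exp_pos _)).ne' hε0.ne').ne'
      · exact ENNReal.mul_ne_top ENNReal.ofReal_ne_top hεtop
    set C : ℝ := ((δ⁻¹) ^ 2 - 1) / 2 with hC
    -- key finite-sum bound
    have key : ∀ s : Finset ℕ, (∀ j ∈ s, v j ≠ 0) → ∑ j ∈ s, (v j : ℝ) ≤ C := by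
      intro s hs
      set t : ℝ := ∑ j ∈ s, (v j : ℝ) with ht
      have ht0 : 0 ≤ t := Finset.sum_nonneg fun j _ => (v j).coe_nonneg
      have hst : (0:ℝ) < Real.sqrt (1 + 2 * t) := Real.sqrt_pos.2 (by linarith)
      have hlow : ENNReal.ofReal (Real.exp (-(n : ℝ))) * ε
          ≤ ∫⁻ ω, ∏ j ∈ s, ENNReal.ofReal (Real.exp (-(Z j ω) ^ 2)) ∂P := by
        have hpt : ∀ ω ∈ A, ENNReal.ofReal (Real.exp (-(n : ℝ)))
            ≤ ∏ j ∈ s, ENNReal.ofReal (Real.exp (-(Z j ω) ^ 2)) := by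
          intro ω hω
          have hsum : ∑ j ∈ s, (Z j ω) ^ 2 ≤ (n : ℝ) := by
            have h1 : ∑ j ∈ s, ENNReal.ofReal ((Z j ω) ^ 2)
                ≤ ∑' j, ENNReal.ofReal ((Z j ω) ^ 2) := ENNReal.sum_le_tsum s
            have h2 : (ENNReal.ofReal (∑ j ∈ s, (Z j ω) ^ 2)) ≤ (n : ℝ≥0∞) := by
              rw [ENNReal.ofReal_sum_of_nonneg (fun j _ => sq_nonneg _)]
              exact h1.trans hω
            rw [← ENNReal.ofReal_natCast n] at h2
            exact (ENNReal.ofReal_le_ofReal_iff (Nat.cast_nonneg n)).1 h2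
          calc ENNReal.ofReal (Real.exp (-(n : ℝ)))
              ≤ ENNReal.ofReal (Real.exp (-(∑ j ∈ s, (Z j ω) ^ 2))) := by
                apply ENNReal.ofReal_le_ofReal
                exact Real.exp_le_exp.2 (by linarith)
            _ = ∏ j ∈ s, ENNReal.ofReal (Real.exp (-(Z j ω) ^ 2)) := by
                rw [← ENNReal.ofReal_prod_of_nonneg (fun j _ => (Real.exp_pos _).le)]
                congr 1
                rw [← Real.exp_sum]
                congr 1
                rw [Finset.sum_neg_distrib]
        calc ENNReal.ofReal (Real.exp (-(n : ℝ))) * ε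
            = ∫⁻ _ in A, ENNReal.ofReal (Real.exp (-(n : ℝ))) ∂P := by
              rw [setLIntegral_const]
          _ ≤ ∫⁻ ω in A, ∏ j ∈ s, ENNReal.ofReal (Real.exp (-(Z j ω) ^ 2)) ∂P := by
              apply setLIntegral_mono (by fun_prop) hpt
          _ ≤ ∫⁻ ω, ∏ j ∈ s, ENNReal.ofReal (Real.exp (-(Z j ω) ^ 2)) ∂P :=
              setLIntegral_le_lintegral _ _
      have hup := holder_bound P Z hmeas v hmap s hs
      have hcomb := hlow.trans hup
      -- convert to reals
      have hδle : δ ≤ (Real.sqrt (1 + 2 * t))⁻¹ := by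
        have := ENNReal.toReal_mono ENNReal.ofReal_ne_top hcomb
        rw [← hδ] at this
        refine this.trans ?_
        rw [ENNReal.toReal_ofReal (by positivity)]
      have hsqrt : Real.sqrt (1 + 2 * t) ≤ δ⁻¹ := by
        rw [← inv_inv (Real.sqrt (1 + 2 * t))]
        exact inv_anti₀ hδ0 hδle
      have hsq : 1 + 2 * t ≤ (δ⁻¹) ^ 2 := by
        have := pow_le_pow_left₀ hst.le hsqrt 2
        rwa [Real.sq_sqrt (by linarith)] at this
      rw [hC]
      linarith
    -- conclude
    have hC0 : 0 ≤ C := le_trans (by simp) (key ∅ (by simp))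
    have hvsum : ∑' j, ((v j : ℝ≥0) : ℝ≥0∞) ≤ ENNReal.ofReal C := by
      rw [ENNReal.tsum_eq_iSup_sum]
      refine iSup_le fun s => ?_
      classical
      set s' : Finset ℕ := s.filter (fun j => v j ≠ 0) with hs'
      have hsub' : s' ⊆ s := Finset.filter_subset _ _
      have hzero : ∀ j ∈ s, j ∉ s' → ((v j : ℝ≥0) : ℝ≥0∞) = 0 := by
        intro j hj hj'
        have : v j = 0 := by
          by_contra hne
          exact hj' (Finset.mem_filter.2 ⟨hj, hne⟩)
        simp [this]
      rw [← Finset.sum_subset hsub' hzero]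
      have : ∑ j ∈ s', ((v j : ℝ≥0) : ℝ≥0∞) = ENNReal.ofReal (∑ j ∈ s', (v j : ℝ)) := by
        rw [ENNReal.ofReal_sum_of_nonneg (fun j _ => (v j).coe_nonneg)]
        exact Finset.sum_congr rfl fun j _ => ENNReal.ofReal_coe_nnreal.symm
      rw [this]
      exact ENNReal.ofReal_le_ofReal (key s' (fun j hj => (Finset.mem_filter.1 hj).2))
    have hσv : ∀ j, ∫⁻ ω, ENNReal.ofReal ((Z j ω) ^ 2) ∂P ≤ ((v j : ℝ≥0) : ℝ≥0∞) := by
      intro j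
      calc ∫⁻ ω, ENNReal.ofReal ((Z j ω) ^ 2) ∂P
          = ∫⁻ x, ENNReal.ofReal (x ^ 2) ∂(P.map (Z j)) :=
            (lintegral_map (f := fun x : ℝ => ENNReal.ofReal (x ^ 2)) (by fun_prop)
              (hmeas j)).symm
        _ ≤ _ := by rw [hmap j]; exact gauss_sq_le (v j)
    calc ∑' j, ∫⁻ ω, ENNReal.ofReal ((Z j ω) ^ 2) ∂P
        ≤ ∑' j, ((v j : ℝ≥0) : ℝ≥0∞) := ENNReal.tsum_le_tsum hσv
      _ ≤ ENNReal.ofReal C := hvsum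
      _ < ⊤ := ENNReal.ofReal_lt_top
  constructor
  · exact ⟨h12, fun h2 => h31 (h2 ▸ zero_lt_one)⟩
  · exact ⟨fun h2 => h2 ▸ zero_lt_one, fun h3 => h12 (h31 h3)⟩
end

section
/- Let V be a real separable Hilbert space and X a V-valued random element (a Borel measurable map from a probability space into V) such that for every f ∈ V the real random variable ⟨X, f⟩ is Gaussian. Then E[‖X‖²] < ∞. -/
open MeasureTheory ProbabilityTheory
open scoped ENNReal NNReal

open Real
open scoped InnerProductSpace

-- basic growth bound
lemma aux_pow_le_exp {x : ℝ} (k : ℕ) (hk : k ≤ 4) :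
    |x| ^ k ≤ 65 * Real.exp (x ^ 2 / 4) := by
  have h1 : x ^ 2 / 4 ≥ 0 := by positivity
  have h2 : x ^ 2 / 8 + 1 ≤ Real.exp (x ^ 2 / 8) := Real.add_one_le_exp _
  have h3 : (x ^ 2 / 8 + 1) ^ 2 ≤ Real.exp (x ^ 2 / 4) := by
    have := mul_self_le_mul_self (by positivity) h2
    calc (x ^ 2 / 8 + 1) ^ 2 = (x^2/8+1) * (x^2/8+1) := sq _
    _ ≤ Real.exp (x^2/8) * Real.exp (x^2/8) := this
    _ = Real.exp (x^2/4) := by rw [← Real.exp_add]; ring_nf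
  have hx4 : x ^ 4 ≤ 64 * Real.exp (x ^ 2 / 4) := by nlinarith [sq_nonneg x, sq_nonneg (x^2)]
  have habs : |x| ^ k ≤ 1 + x ^ 4 := by
    rcases le_total (|x|) 1 with h | h
    · have : |x| ^ k ≤ 1 := pow_le_one₀ (abs_nonneg x) h
      nlinarith [sq_nonneg (x^2)]
    · have h1k : |x| ^ k ≤ |x| ^ 4 := pow_le_pow_right₀ h hk
      have : |x| ^ 4 = x ^ 4 := by rw [← abs_pow, abs_of_nonneg (by positivity)]
      nlinarith
  have hexp1 : (1:ℝ) ≤ Real.exp (x ^ 2 / 4) := Real.one_le_exp h1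
  nlinarith

lemma integrable_pow_gaussian_std (k : ℕ) (hk : k ≤ 4) :
    Integrable (fun x : ℝ => x ^ k) (gaussianReal 0 1) := by
  rw [gaussianReal_of_var_ne_zero 0 one_ne_zero]
  rw [integrable_withDensity_iff (measurable_gaussianPDF 0 1)
    (Filter.Eventually.of_forall fun x => ENNReal.ofReal_lt_top)]
  have hb : (0:ℝ) < 1/4 := by norm_num
  refine (integrable_exp_neg_mul_sq hb).const_mul ((Real.sqrt (2 * π * 1))⁻¹ * 65) |>.mono' ?_ ?_
  · exact ((measurable_id'.pow_const k).mul
      ((measurable_gaussianPDF 0 1).ennreal_toReal)).aestronglyMeasurable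
  · refine Filter.Eventually.of_forall fun x => ?_
    have hpdf : ((gaussianPDF 0 1 x).toReal) = gaussianPDFReal 0 1 x :=
      ENNReal.toReal_ofReal (gaussianPDFReal_nonneg 0 1 x)
    rw [Real.norm_eq_abs, abs_mul, hpdf]
    have h1 : |x ^ k| ≤ 65 * Real.exp (x ^ 2 / 4) := by
      rw [abs_pow]; exact aux_pow_le_exp k hk
    have h2 : |gaussianPDFReal 0 1 x| = (Real.sqrt (2 * π * 1))⁻¹ * Real.exp (-(x ^ 2) / 2) := by
      rw [abs_of_nonneg (gaussianPDFReal_nonneg 0 1 x)]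
      simp [gaussianPDFReal]
    rw [h2]
    have key : 65 * Real.exp (x ^ 2 / 4) * Real.exp (-(x^2) / 2) = 65 * Real.exp (-(1/4) * x ^ 2) := by
      rw [mul_assoc, ← Real.exp_add]; ring_nf
    have hnn : (0:ℝ) ≤ (Real.sqrt (2 * π * 1))⁻¹ := by positivity
    calc |x ^ k| * ((Real.sqrt (2 * π * 1))⁻¹ * Real.exp (-(x ^ 2) / 2))
        ≤ (65 * Real.exp (x ^ 2 / 4)) * ((Real.sqrt (2 * π * 1))⁻¹ * Real.exp (-(x ^ 2) / 2)) := by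
          apply mul_le_mul_of_nonneg_right h1 (by positivity)
      _ = (Real.sqrt (2 * π * 1))⁻¹ * 65 * Real.exp (-(1/4) * x ^ 2) := by
          rw [mul_assoc ((Real.sqrt (2 * π * 1))⁻¹) 65 _, ← key]; ring

lemma gaussian_std_neg_map :
    (gaussianReal 0 1).map (fun x : ℝ => (-1) * x) = gaussianReal 0 1 := by
  rw [show (fun x : ℝ => (-1) * x) = ((-1 : ℝ) * ·) from rfl, gaussianReal_map_const_mul (-1 : ℝ)]
  norm_num

lemma integral_pow_gaussian_std_odd (k : ℕ) (hk : k ≤ 4) (hodd : Odd k) :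
    ∫ x, x ^ k ∂(gaussianReal 0 1) = 0 := by
  have h1 : ∫ x, x ^ k ∂(gaussianReal 0 1)
      = ∫ x, x ^ k ∂((gaussianReal 0 1).map (fun x : ℝ => (-1) * x)) := by
    rw [gaussian_std_neg_map]
  rw [integral_map (by fun_prop) (by fun_prop)] at h1
  simp only [neg_one_mul, hodd.neg_pow] at h1
  rw [integral_neg] at h1
  linarith

lemma integral_sq_gaussian_std_pos : 0 < ∫ x, x ^ 2 ∂(gaussianReal 0 1) := by
  set γ := gaussianReal 0 1
  have hint : Integrable (fun x : ℝ => x ^ 2) γ := integrable_pow_gaussian_std 2 (by norm_num)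
  have hm : (0:ℝ≥0∞) < γ (Set.Ici 1) := by
    rcases eq_or_lt_of_le (zero_le : (0:ℝ≥0∞) ≤ γ (Set.Ici 1)) with h | h
    · exfalso
      have := gaussianReal_absolutelyContinuous' 0 one_ne_zero h.symm
      simp at this
    · exact h
  have hlt : γ (Set.Ici 1) < ⊤ := lt_of_le_of_lt (measure_mono (Set.subset_univ _)) (by simp)
  have h2 : (γ (Set.Ici 1)).toReal ≤ ∫ x in Set.Ici 1, x ^ 2 ∂γ := by
    have : ∫ x in Set.Ici (1:ℝ), (1:ℝ) ∂γ ≤ ∫ x in Set.Ici 1, x ^ 2 ∂γ := by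
      refine setIntegral_mono_on (integrable_const 1).integrableOn
        hint.integrableOn measurableSet_Ici fun x hx => ?_
      nlinarith [Set.mem_Ici.mp hx]
    simp at this; exact this
  have h3 : ∫ x in Set.Ici (1:ℝ), x ^ 2 ∂γ ≤ ∫ x, x ^ 2 ∂γ :=
    setIntegral_le_integral hint (Filter.Eventually.of_forall fun x => by positivity)
  have h4 : 0 < (γ (Set.Ici 1)).toReal := ENNReal.toReal_pos hm.ne' hlt.ne
  linarith

lemma gaussian_scale_map (v : ℝ≥0) :
    (gaussianReal 0 1).map (fun x : ℝ => Real.sqrt v * x) = gaussianReal 0 v := by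
  rw [show (fun x : ℝ => Real.sqrt v * x) = ((Real.sqrt v : ℝ) * ·) from rfl,
    gaussianReal_map_const_mul]
  rw [mul_zero]
  congr 1
  ext
  simp [Real.sq_sqrt v.2]



lemma integral_pow_gaussian_var (v : ℝ≥0) (k : ℕ) :
    ∫ x, x ^ k ∂(gaussianReal 0 v)
      = (Real.sqrt v) ^ k * ∫ x, x ^ k ∂(gaussianReal 0 1) := by
  rw [← gaussian_scale_map v, integral_map (by fun_prop) (by fun_prop)]
  simp_rw [mul_pow]
  rw [MeasureTheory.integral_const_mul]

lemma integrable_pow_gaussian_var (v : ℝ≥0) (k : ℕ) (hk : k ≤ 4) :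
    Integrable (fun x : ℝ => x ^ k) (gaussianReal 0 v) := by
  rw [← gaussian_scale_map v]
  rw [integrable_map_measure (by fun_prop) (by fun_prop)]
  have := (integrable_pow_gaussian_std k hk).const_mul ((Real.sqrt v) ^ k)
  have heq : ((fun x : ℝ => x ^ k) ∘ fun x : ℝ => Real.sqrt v * x)
      = fun x : ℝ => (Real.sqrt v) ^ k * x ^ k := by ext x; simp [mul_pow]
  rw [heq]; exact this

/-- Centering a Gaussian real random variable. -/
lemma map_centered_gaussian {Ω : Type*} [MeasurableSpace Ω] {P : Measure Ω}
    {a : Ω → ℝ} (ha : Measurable a) {m : ℝ} {v : ℝ≥0}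
    (h : P.map a = gaussianReal m v) :
    P.map (fun ω => a ω - m) = gaussianReal 0 v := by
  have : (fun ω => a ω - m) = (· + (-m)) ∘ a := by ext ω; simp [sub_eq_add_neg]
  rw [this, ← Measure.map_map (by fun_prop) ha, h, gaussianReal_map_add_const]
  simp

lemma integrable_centered_pow {Ω : Type*} [MeasurableSpace Ω] {P : Measure Ω}
    {a : Ω → ℝ} (ha : Measurable a) {m : ℝ} {v : ℝ≥0}
    (h : P.map a = gaussianReal m v) (k : ℕ) (hk : k ≤ 4) :
    Integrable (fun ω => (a ω - m) ^ k) P := by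
  have hmeas : Measurable fun ω => a ω - m := by fun_prop
  have h2 := map_centered_gaussian ha h
  have key : Integrable (fun x : ℝ => x ^ k) (P.map (fun ω => a ω - m)) := by
    rw [h2]; exact integrable_pow_gaussian_var v k hk
  have := (integrable_map_measure (f := fun ω => a ω - m) (g := fun x : ℝ => x ^ k)
    (measurable_id'.pow_const k).aestronglyMeasurable hmeas.aemeasurable).mp key
  exact this

lemma integral_centered_pow {Ω : Type*} [MeasurableSpace Ω] {P : Measure Ω}
    {a : Ω → ℝ} (ha : Measurable a) {m : ℝ} {v : ℝ≥0}
    (h : P.map a = gaussianReal m v) (k : ℕ) :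
    ∫ ω, (a ω - m) ^ k ∂P = (Real.sqrt v) ^ k * ∫ x, x ^ k ∂(gaussianReal 0 1) := by
  have hmeas : Measurable fun ω => a ω - m := by fun_prop
  rw [← integral_pow_gaussian_var v k, ← map_centered_gaussian ha h,
    integral_map hmeas.aemeasurable (by fun_prop)]

section ProdMoments

variable {Ω : Type*} [MeasurableSpace Ω] {P : Measure Ω} [IsProbabilityMeasure P]
  {b : Ω → ℝ}

lemma prod_mul_integrable (hb : Measurable b)
    (hi : ∀ k, k ≤ 4 → Integrable (fun ω => b ω ^ k) P) {i j : ℕ}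
    (hij : i ≤ 4) (hji : j ≤ 4) :
    Integrable (fun z : Ω × Ω => b z.1 ^ i * b z.2 ^ j) (P.prod P) :=
  (hi i hij).mul_prod (hi j hji)

lemma prod_mul_integral {i j : ℕ} :
    ∫ z : Ω × Ω, b z.1 ^ i * b z.2 ^ j ∂(P.prod P)
      = (∫ ω, b ω ^ i ∂P) * ∫ ω, b ω ^ j ∂P :=
  integral_prod_mul (fun ω => b ω ^ i) (fun ω => b ω ^ j)

lemma prod_sub_sq_integrable (hb : Measurable b)
    (hi : ∀ k, k ≤ 4 → Integrable (fun ω => b ω ^ k) P) :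
    Integrable (fun z : Ω × Ω => (b z.1 - b z.2) ^ 2) (P.prod P) := by
  have h : (fun z : Ω × Ω => (b z.1 - b z.2) ^ 2)
      = fun z : Ω × Ω => (b z.1 ^ 2 * b z.2 ^ 0 + b z.1 ^ 0 * b z.2 ^ 2)
          - 2 * (b z.1 ^ 1 * b z.2 ^ 1) := by ext z; ring
  rw [h]
  exact ((prod_mul_integrable hb hi (by norm_num) (by norm_num)).add
    (prod_mul_integrable hb hi (by norm_num) (by norm_num))).sub
    ((prod_mul_integrable hb hi (by norm_num) (by norm_num)).const_mul 2)

lemma prod_sub_pow4_integrable (hb : Measurable b)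
    (hi : ∀ k, k ≤ 4 → Integrable (fun ω => b ω ^ k) P) :
    Integrable (fun z : Ω × Ω => (b z.1 - b z.2) ^ 4) (P.prod P) := by
  have h : (fun z : Ω × Ω => (b z.1 - b z.2) ^ 4)
      = fun z : Ω × Ω => (b z.1 ^ 4 * b z.2 ^ 0 + b z.1 ^ 0 * b z.2 ^ 4
          + 6 * (b z.1 ^ 2 * b z.2 ^ 2))
          - (4 * (b z.1 ^ 3 * b z.2 ^ 1) + 4 * (b z.1 ^ 1 * b z.2 ^ 3)) := by ext z; ring
  rw [h]
  exact (((prod_mul_integrable hb hi (by norm_num) (by norm_num)).add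
    (prod_mul_integrable hb hi (by norm_num) (by norm_num))).add
    ((prod_mul_integrable hb hi (by norm_num) (by norm_num)).const_mul 6)).sub
    (((prod_mul_integrable hb hi (by norm_num) (by norm_num)).const_mul 4).add
     ((prod_mul_integrable hb hi (by norm_num) (by norm_num)).const_mul 4))

lemma prod_sub_sq_integral (hb : Measurable b)
    (hi : ∀ k, k ≤ 4 → Integrable (fun ω => b ω ^ k) P)
    (h1 : ∫ ω, b ω ^ 1 ∂P = 0) :
    ∫ z : Ω × Ω, (b z.1 - b z.2) ^ 2 ∂(P.prod P) = 2 * ∫ ω, b ω ^ 2 ∂P := by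
  have h : (fun z : Ω × Ω => (b z.1 - b z.2) ^ 2)
      = fun z : Ω × Ω => (b z.1 ^ 2 * b z.2 ^ 0 + b z.1 ^ 0 * b z.2 ^ 2)
          - 2 * (b z.1 ^ 1 * b z.2 ^ 1) := by ext z; ring
  have i20 := prod_mul_integrable (i := 2) (j := 0) hb hi (by norm_num) (by norm_num)
  have i02 := prod_mul_integrable (i := 0) (j := 2) hb hi (by norm_num) (by norm_num)
  have i11 := prod_mul_integrable (i := 1) (j := 1) hb hi (by norm_num) (by norm_num)
  have isum : Integrable (fun z : Ω × Ω => b z.1 ^ 2 * b z.2 ^ 0 + b z.1 ^ 0 * b z.2 ^ 2)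
      (P.prod P) := i20.add i02
  have isub : Integrable (fun z : Ω × Ω => 2 * (b z.1 ^ 1 * b z.2 ^ 1)) (P.prod P) :=
    i11.const_mul 2
  rw [h, integral_sub isum isub, integral_add i20 i02,
    MeasureTheory.integral_const_mul, prod_mul_integral, prod_mul_integral,
    prod_mul_integral, h1]
  simp; ring

lemma prod_sub_pow4_integral (hb : Measurable b)
    (hi : ∀ k, k ≤ 4 → Integrable (fun ω => b ω ^ k) P)
    (h1 : ∫ ω, b ω ^ 1 ∂P = 0) (h3 : ∫ ω, b ω ^ 3 ∂P = 0) :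
    ∫ z : Ω × Ω, (b z.1 - b z.2) ^ 4 ∂(P.prod P)
      = 2 * (∫ ω, b ω ^ 4 ∂P) + 6 * (∫ ω, b ω ^ 2 ∂P) ^ 2 := by
  have h : (fun z : Ω × Ω => (b z.1 - b z.2) ^ 4)
      = fun z : Ω × Ω => (b z.1 ^ 4 * b z.2 ^ 0 + b z.1 ^ 0 * b z.2 ^ 4
          + 6 * (b z.1 ^ 2 * b z.2 ^ 2))
          - (4 * (b z.1 ^ 3 * b z.2 ^ 1) + 4 * (b z.1 ^ 1 * b z.2 ^ 3)) := by ext z; ring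
  have i40 := prod_mul_integrable (i := 4) (j := 0) hb hi (by norm_num) (by norm_num)
  have i04 := prod_mul_integrable (i := 0) (j := 4) hb hi (by norm_num) (by norm_num)
  have i22 := prod_mul_integrable (i := 2) (j := 2) hb hi (by norm_num) (by norm_num)
  have i31 := prod_mul_integrable (i := 3) (j := 1) hb hi (by norm_num) (by norm_num)
  have i13 := prod_mul_integrable (i := 1) (j := 3) hb hi (by norm_num) (by norm_num)
  have ia : Integrable (fun z : Ω × Ω => b z.1 ^ 4 * b z.2 ^ 0 + b z.1 ^ 0 * b z.2 ^ 4)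
      (P.prod P) := i40.add i04
  have ib : Integrable (fun z : Ω × Ω => b z.1 ^ 4 * b z.2 ^ 0 + b z.1 ^ 0 * b z.2 ^ 4
      + 6 * (b z.1 ^ 2 * b z.2 ^ 2)) (P.prod P) := ia.add (i22.const_mul 6)
  have ic : Integrable (fun z : Ω × Ω => 4 * (b z.1 ^ 3 * b z.2 ^ 1)
      + 4 * (b z.1 ^ 1 * b z.2 ^ 3)) (P.prod P) := (i31.const_mul 4).add (i13.const_mul 4)
  rw [h, integral_sub ib ic,
    integral_add ia (i22.const_mul 6), integral_add i40 i04,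
    integral_add (i31.const_mul 4) (i13.const_mul 4),
    MeasureTheory.integral_const_mul, MeasureTheory.integral_const_mul,
    MeasureTheory.integral_const_mul,
    prod_mul_integral, prod_mul_integral, prod_mul_integral, prod_mul_integral,
    prod_mul_integral, h1, h3]
  simp; ring

end ProdMoments

lemma hilbert_parseval_sq {V : Type*} [NormedAddCommGroup V] [InnerProductSpace ℝ V]
    [CompleteSpace V] {ι : Type*} (b : HilbertBasis ι ℝ V) (y : V) :
    HasSum (fun i => (inner ℝ y (b i) : ℝ) ^ 2) (‖y‖ ^ 2) := by
  have h := b.hasSum_inner_mul_inner y y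
  have h2 : (fun i => (inner ℝ y (b i) : ℝ) * inner ℝ (b i) y)
      = fun i => (inner ℝ y (b i) : ℝ) ^ 2 := by
    ext i; rw [real_inner_comm (b i) y]; ring
  rw [h2] at h
  rwa [real_inner_self_eq_norm_sq] at h

lemma lintegral_cauchy_schwarz {α : Type*} [MeasurableSpace α] {μ : Measure α}
    {f g : α → ℝ≥0∞} (hf : AEMeasurable f μ) (hg : AEMeasurable g μ) :
    ∫⁻ a, f a * g a ∂μ ≤ (∫⁻ a, f a ^ 2 ∂μ) ^ (1/2 : ℝ) * (∫⁻ a, g a ^ 2 ∂μ) ^ (1/2 : ℝ) := by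
  have hpq : Real.HolderConjugate 2 2 := Real.HolderConjugate.two_two
  have := ENNReal.lintegral_mul_le_Lp_mul_Lq μ hpq hf hg
  simpa [ENNReal.rpow_two] using this

lemma ennreal_pow_half {x : ℝ≥0∞} : (x ^ 2) ^ (1/2 : ℝ) = x := by
  rw [← ENNReal.rpow_natCast x 2, ← ENNReal.rpow_mul]
  norm_num

open scoped InnerProductSpace

/-- A Gaussian random element `X` of a real separable Hilbert space (i.e. `⟪X, f⟫` is a
(possibly degenerate) Gaussian real random variable for every `f`) has finite second moment:
`E[‖X‖²] < ∞`. -/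
theorem gaussian_hilbert_second_moment_finite
    {V : Type*} [NormedAddCommGroup V] [InnerProductSpace ℝ V] [CompleteSpace V]
    [TopologicalSpace.SeparableSpace V] [MeasurableSpace V] [BorelSpace V]
    {Ω : Type*} [MeasurableSpace Ω] (P : Measure Ω) [IsProbabilityMeasure P]
    (X : Ω → V) (hX : Measurable X)
    (hgauss : ∀ f : V, ∃ (m : ℝ) (v : ℝ≥0),
      P.map (fun ω => (inner ℝ (X ω) f : ℝ)) = gaussianReal m v) :
    (∫⁻ ω, (‖X ω‖₊ : ℝ≥0∞) ^ 2 ∂P) < ⊤ := by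
  classical
  haveI : SecondCountableTopology V :=
    UniformSpace.secondCountable_of_separable V
  obtain ⟨w, bas, hbasc⟩ := exists_hilbertBasis ℝ V
  choose mf vf hmv using hgauss
  set M2 : ℝ := ∫ x, x ^ 2 ∂(gaussianReal 0 1) with hM2def
  set M4 : ℝ := ∫ x, x ^ 4 ∂(gaussianReal 0 1) with hM4def
  have hM2pos : 0 < M2 := integral_sq_gaussian_std_pos
  have hM4nn : 0 ≤ M4 := integral_nonneg fun x => by positivity
  set K : ℝ := 2 * M4 + 6 * M2 ^ 2 with hKdef
  have hKpos : 0 < K := by positivity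
  set Q : Measure (Ω × Ω) := P.prod P with hQdef
  haveI : IsProbabilityMeasure Q := by rw [hQdef]; infer_instance
  -- countability of the Hilbert basis index
  have hwcount : Countable w := by
    obtain ⟨D, hDc, hDd⟩ := TopologicalSpace.exists_countable_dense V
    have hsep : ∀ i j : w, i ≠ j → (2 : ℝ) ≤ ‖bas i - bas j‖ ^ 2 := by
      intro i j hij
      have horth := bas.orthonormal
      have h1 : ‖bas i‖ = 1 := horth.1 i
      have h2 : ‖bas j‖ = 1 := horth.1 j
      have h3 : (inner ℝ (bas i) (bas j) : ℝ) = 0 := horth.2 hij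
      have := norm_sub_sq_real (bas i) (bas j)
      rw [h1, h2, h3] at this
      simp at this
      rw [this]; norm_num
    choose g hgball hgD using fun i : w =>
      Metric.dense_iff.mp hDd (bas i) 0.7 (by norm_num)
    haveI := hDc.to_subtype
    have hinj : Function.Injective (fun i : w => (⟨g i, hgD i⟩ : D)) := by
      intro i j hij
      by_contra hne
      have h2 := hsep i j (fun h => hne (by rw [h]))
      have hgi : dist (g i) (bas i) < 0.7 := Metric.mem_ball.mp (hgball i)
      have hgj : dist (g j) (bas j) < 0.7 := Metric.mem_ball.mp (hgball j)
      have hgg : g i = g j := congrArg Subtype.val hij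
      have htri : dist (bas i) (bas j) ≤ dist (bas i) (g i) + dist (g j) (bas j) := by
        rw [hgg]; exact dist_triangle _ _ _
      rw [dist_comm (bas i) (g i)] at htri
      have hd : dist (bas i) (bas j) < 1.4 := by linarith
      have hnorm : ‖bas i - bas j‖ < 1.4 := by rwa [dist_eq_norm] at hd
      nlinarith [norm_nonneg (bas i - bas j)]
    exact hinj.countable
  -- per-direction definitions
  set c : V → Ω → ℝ := fun f ω => (inner ℝ (X ω) f : ℝ) - mf f with hcdef
  have hameas : ∀ f : V, Measurable fun ω => (inner ℝ (X ω) f : ℝ) :=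
    fun f => hX.inner_const (c := f)
  have hcmeas : ∀ f : V, Measurable (c f) := fun f => (hameas f).sub_const _
  have hcint : ∀ (f : V) (k : ℕ), k ≤ 4 → Integrable (fun ω => c f ω ^ k) P :=
    fun f k hk => integrable_centered_pow (hameas f) (hmv f) k hk
  have hc1 : ∀ f : V, ∫ ω, c f ω ^ 1 ∂P = 0 := by
    intro f
    rw [hcdef]
    rw [integral_centered_pow (hameas f) (hmv f) 1,
      integral_pow_gaussian_std_odd 1 (by norm_num) odd_one, mul_zero]
  have hc3 : ∀ f : V, ∫ ω, c f ω ^ 3 ∂P = 0 := by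
    intro f
    rw [hcdef]
    rw [integral_centered_pow (hameas f) (hmv f) 3,
      integral_pow_gaussian_std_odd 3 (by norm_num) (by decide), mul_zero]
  have hsq : ∀ f : V, (Real.sqrt (vf f)) ^ 2 = (vf f : ℝ) := fun f => Real.sq_sqrt (vf f).2
  have hc2 : ∀ f : V, ∫ ω, c f ω ^ 2 ∂P = (vf f : ℝ) * M2 := by
    intro f
    rw [hcdef]
    rw [integral_centered_pow (hameas f) (hmv f) 2, hsq f, hM2def]
  have hc4 : ∀ f : V, ∫ ω, c f ω ^ 4 ∂P = ((vf f : ℝ)) ^ 2 * M4 := by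
    intro f
    rw [hcdef]
    rw [integral_centered_pow (hameas f) (hmv f) 4, hM4def]
    congr 1
    rw [show (4 : ℕ) = 2 * 2 from rfl, pow_mul, hsq f]
  -- the symmetrized variable
  set ξ : V → Ω × Ω → ℝ := fun f z => c f z.1 - c f z.2 with hXidef
  have hξmeas : ∀ f : V, Measurable (ξ f) := fun f =>
    ((hcmeas f).comp measurable_fst).sub ((hcmeas f).comp measurable_snd)
  have hξeq : ∀ (f : V) (z : Ω × Ω), ξ f z = (inner ℝ (X z.1 - X z.2) f : ℝ) := by
    intro f z
    rw [hXidef, hcdef]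
    simp [inner_sub_left]
  have hQ2 : ∀ f : V, ∫ z, ξ f z ^ 2 ∂Q = 2 * ((vf f : ℝ) * M2) := by
    intro f
    rw [hXidef, hQdef]
    rw [prod_sub_sq_integral (hcmeas f) (hcint f) (hc1 f), hc2 f]
  have hQ4 : ∀ f : V, ∫ z, ξ f z ^ 4 ∂Q = K * ((vf f : ℝ)) ^ 2 := by
    intro f
    rw [hXidef, hQdef]
    rw [prod_sub_pow4_integral (hcmeas f) (hcint f) (hc1 f) (hc3 f), hc2 f, hc4 f, hKdef]
    ring
  have hl2 : ∀ f : V, ∫⁻ z, ENNReal.ofReal (ξ f z ^ 2) ∂Q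
      = ENNReal.ofReal (2 * ((vf f : ℝ) * M2)) := by
    intro f
    rw [← hQ2 f]
    rw [MeasureTheory.ofReal_integral_eq_lintegral_ofReal
      (by rw [hXidef, hQdef]; exact prod_sub_sq_integrable (hcmeas f) (hcint f))
      (Filter.Eventually.of_forall fun z => by positivity)]
  have hl4 : ∀ f : V, ∫⁻ z, ENNReal.ofReal (ξ f z ^ 4) ∂Q
      = ENNReal.ofReal (K * ((vf f : ℝ)) ^ 2) := by
    intro f
    rw [← hQ4 f]
    rw [MeasureTheory.ofReal_integral_eq_lintegral_ofReal
      (by rw [hXidef, hQdef]; exact prod_sub_pow4_integrable (hcmeas f) (hcint f))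
      (Filter.Eventually.of_forall fun z => by positivity)]
  have hpowhalf : ∀ x : ℝ≥0∞, (x ^ (1/2 : ℝ)) ^ 2 = x := by
    intro x
    rw [← ENNReal.rpow_natCast (x ^ (1/2:ℝ)) 2, ← ENNReal.rpow_mul]
    norm_num
  -- the key Paley-Zygmund estimate for each finite set of directions
  have key : ∀ F : Finset w, 0 < ∑ i ∈ F, (vf (bas i) : ℝ) →
      ENNReal.ofReal (M2 ^ 2 / K)
        ≤ Q {z : Ω × Ω | M2 * (∑ i ∈ F, (vf (bas i) : ℝ)) < ‖X z.1 - X z.2‖ ^ 2} := by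
    intro F ht
    set t : ℝ := ∑ i ∈ F, (vf (bas i) : ℝ) with htdef
    set S : Ω × Ω → ℝ := fun z => ∑ i ∈ F, ξ (bas i) z ^ 2 with hSdef
    have hSnn : ∀ z, 0 ≤ S z := fun z => Finset.sum_nonneg fun i _ => sq_nonneg _
    have hSmeas : Measurable S := Finset.measurable_sum F fun i _ => (hξmeas (bas i)).pow_const 2
    set u : w → Ω × Ω → ℝ≥0∞ := fun i z => ENNReal.ofReal (ξ (bas i) z ^ 2) with hudef
    have humeas : ∀ i : w, Measurable (u i) := fun i =>
      ((hξmeas (bas i)).pow_const 2).ennreal_ofReal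
    have h1 : ∫⁻ z, ENNReal.ofReal (S z) ∂Q = ENNReal.ofReal (2 * M2 * t) := by
      have hz : ∀ z, ENNReal.ofReal (S z) = ∑ i ∈ F, u i z := fun z =>
        ENNReal.ofReal_sum_of_nonneg fun i _ => sq_nonneg _
      simp only [hz]
      rw [lintegral_finset_sum F fun i _ => humeas i]
      have : ∀ i ∈ F, ∫⁻ z, u i z ∂Q = ENNReal.ofReal (2 * M2 * (vf (bas i) : ℝ)) := by
        intro i _
        rw [hudef]
        simp only
        rw [hl2 (bas i)]
        congr 1
        ring
      rw [Finset.sum_congr rfl this, ← ENNReal.ofReal_sum_of_nonneg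
        (fun i _ => by positivity), ← Finset.mul_sum]
    have h2 : ∫⁻ z, ENNReal.ofReal (S z) * ENNReal.ofReal (S z) ∂Q
        ≤ ENNReal.ofReal (K * t ^ 2) := by
      have hz : ∀ z, ENNReal.ofReal (S z) = ∑ i ∈ F, u i z := fun z =>
        ENNReal.ofReal_sum_of_nonneg fun i _ => sq_nonneg _
      simp only [hz]
      have hexp : ∀ z, (∑ i ∈ F, u i z) * (∑ j ∈ F, u j z)
          = ∑ i ∈ F, ∑ j ∈ F, u i z * u j z := fun z => Finset.sum_mul_sum F F _ _
      simp only [hexp]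
      rw [lintegral_finset_sum (f := fun i z => ∑ j ∈ F, u i z * u j z) F fun i _ => Finset.measurable_sum F fun j _ =>
        (humeas i).mul (humeas j)]
      have hswap : ∀ i ∈ F, ∫⁻ z, ∑ j ∈ F, u i z * u j z ∂Q
          = ∑ j ∈ F, ∫⁻ z, u i z * u j z ∂Q := fun i _ =>
        lintegral_finset_sum F fun j _ => (humeas i).mul (humeas j)
      rw [Finset.sum_congr rfl hswap]
      have hij : ∀ i ∈ F, ∀ j ∈ F, ∫⁻ z, u i z * u j z ∂Q
          ≤ ENNReal.ofReal (Real.sqrt K * (vf (bas i) : ℝ))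
            * ENNReal.ofReal (Real.sqrt K * (vf (bas j) : ℝ)) := by
        intro i _ j _
        have hCS := lintegral_cauchy_schwarz (μ := Q) (humeas i).aemeasurable
          (humeas j).aemeasurable
        have hu2 : ∀ k : w, ∫⁻ z, u k z ^ 2 ∂Q
            = (ENNReal.ofReal (Real.sqrt K * (vf (bas k) : ℝ))) ^ 2 := by
          intro k
          have : ∀ z, u k z ^ 2 = ENNReal.ofReal (ξ (bas k) z ^ 4) := by
            intro z
            rw [hudef]
            simp only
            rw [← ENNReal.ofReal_pow (sq_nonneg _), ← pow_mul]
          simp only [this]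
          rw [hl4 (bas k), ← ENNReal.ofReal_pow (by positivity)]
          congr 1
          rw [mul_pow, Real.sq_sqrt hKpos.le]
        calc ∫⁻ z, u i z * u j z ∂Q
            ≤ (∫⁻ z, u i z ^ 2 ∂Q) ^ (1/2:ℝ) * (∫⁻ z, u j z ^ 2 ∂Q) ^ (1/2:ℝ) := hCS
          _ = _ := by rw [hu2 i, hu2 j, ennreal_pow_half, ennreal_pow_half]
      calc ∑ i ∈ F, ∑ j ∈ F, ∫⁻ z, u i z * u j z ∂Q
          ≤ ∑ i ∈ F, ∑ j ∈ F, ENNReal.ofReal (Real.sqrt K * (vf (bas i) : ℝ))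
            * ENNReal.ofReal (Real.sqrt K * (vf (bas j) : ℝ)) := by
            refine Finset.sum_le_sum fun i hi => Finset.sum_le_sum fun j hj => hij i hi j hj
        _ = (∑ i ∈ F, ENNReal.ofReal (Real.sqrt K * (vf (bas i) : ℝ)))
            * (∑ j ∈ F, ENNReal.ofReal (Real.sqrt K * (vf (bas j) : ℝ))) :=
            (Finset.sum_mul_sum F F _ _).symm
        _ = ENNReal.ofReal (K * t ^ 2) := by
            rw [← ENNReal.ofReal_sum_of_nonneg (fun i _ => by positivity),
              ← Finset.mul_sum, ← ENNReal.ofReal_mul (by positivity), ← htdef]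
            congr 1
            rw [← mul_assoc]
            rw [mul_comm (Real.sqrt K * t) (Real.sqrt K)]
            rw [← mul_assoc, Real.mul_self_sqrt hKpos.le]
            ring
    -- Paley-Zygmund
    set A : Set (Ω × Ω) := {z | M2 * t < S z} with hAdef
    have hA : MeasurableSet A := measurableSet_lt measurable_const hSmeas
    have hsplit : (∫⁻ z in A, ENNReal.ofReal (S z) ∂Q)
        + (∫⁻ z in Aᶜ, ENNReal.ofReal (S z) ∂Q) = ENNReal.ofReal (2 * M2 * t) := by
      rw [lintegral_add_compl _ hA, h1]
    have hAc : (∫⁻ z in Aᶜ, ENNReal.ofReal (S z) ∂Q) ≤ ENNReal.ofReal (M2 * t) := by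
      have : (∫⁻ z in Aᶜ, ENNReal.ofReal (S z) ∂Q)
          ≤ ∫⁻ _ in Aᶜ, ENNReal.ofReal (M2 * t) ∂Q := by
        refine setLIntegral_mono measurable_const fun z hz => ?_
        have : ¬ (M2 * t < S z) := hz
        exact ENNReal.ofReal_le_ofReal (le_of_not_gt this)
      refine this.trans ?_
      rw [setLIntegral_const]
      calc ENNReal.ofReal (M2 * t) * Q Aᶜ ≤ ENNReal.ofReal (M2 * t) * 1 := by
            exact mul_le_mul_right prob_le_one _
        _ = _ := mul_one _
    have hAbound : (∫⁻ z in A, ENNReal.ofReal (S z) ∂Q)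
        ≤ (ENNReal.ofReal (K * t ^ 2)) ^ (1/2:ℝ) * (Q A) ^ (1/2:ℝ) := by
      have hind : A.indicator (fun z => ENNReal.ofReal (S z))
          = fun z => ENNReal.ofReal (S z) * A.indicator (fun _ => (1:ℝ≥0∞)) z := by
        ext z
        by_cases hz : z ∈ A <;> simp [hz]
      rw [← lintegral_indicator hA, hind]
      refine (lintegral_cauchy_schwarz (hSmeas.ennreal_ofReal).aemeasurable
        ((measurable_const.indicator hA)).aemeasurable).trans ?_
      have hg2 : ∀ z, (A.indicator (fun _ => (1:ℝ≥0∞)) z) ^ 2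
          = A.indicator (fun _ => (1:ℝ≥0∞)) z := by
        intro z
        by_cases hz : z ∈ A <;> simp [hz]
      have hf2 : ∀ z, (ENNReal.ofReal (S z)) ^ 2
          = ENNReal.ofReal (S z) * ENNReal.ofReal (S z) := fun z => sq _
      simp only [hg2, hf2]
      have hind1 : ∫⁻ z, A.indicator (fun _ => (1:ℝ≥0∞)) z ∂Q = Q A := by
        rw [lintegral_indicator hA]
        simp
      rw [hind1]
      exact mul_le_mul_left (ENNReal.rpow_le_rpow h2 (by norm_num)) _
    have hmain : ENNReal.ofReal (M2 * t)
        ≤ (ENNReal.ofReal (K * t ^ 2)) ^ (1/2:ℝ) * (Q A) ^ (1/2:ℝ) := by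
      have h2M : ENNReal.ofReal (2 * M2 * t)
          = ENNReal.ofReal (M2 * t) + ENNReal.ofReal (M2 * t) := by
        rw [← ENNReal.ofReal_add (by positivity) (by positivity)]
        congr 1
        ring
      have := hsplit.ge
      rw [h2M] at this
      have hsum : ENNReal.ofReal (M2 * t) + ENNReal.ofReal (M2 * t)
          ≤ ((ENNReal.ofReal (K * t ^ 2)) ^ (1/2:ℝ) * (Q A) ^ (1/2:ℝ))
            + ENNReal.ofReal (M2 * t) :=
        le_trans this (add_le_add hAbound hAc)
      exact (ENNReal.add_le_add_iff_right ENNReal.ofReal_ne_top).mp hsum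
    have hQA : ENNReal.ofReal (M2 ^ 2 / K) ≤ Q A := by
      by_contra hlt
      push_neg at hlt
      have hsq2 : (ENNReal.ofReal (M2 * t)) ^ 2 ≤ ENNReal.ofReal (K * t ^ 2) * Q A := by
        calc (ENNReal.ofReal (M2 * t)) ^ 2
            ≤ ((ENNReal.ofReal (K * t ^ 2)) ^ (1/2:ℝ) * (Q A) ^ (1/2:ℝ)) ^ 2 :=
              pow_le_pow_left' hmain 2
          _ = ENNReal.ofReal (K * t ^ 2) * Q A := by
              rw [mul_pow, hpowhalf, hpowhalf]
      have hK0 : ENNReal.ofReal (K * t ^ 2) ≠ 0 := by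
        rw [ne_eq, ENNReal.ofReal_eq_zero, not_le]
        positivity
      have hstrict : ENNReal.ofReal (K * t ^ 2) * Q A
          < ENNReal.ofReal (K * t ^ 2) * ENNReal.ofReal (M2 ^ 2 / K) := by
        rw [ENNReal.mul_lt_mul_iff_right hK0 ENNReal.ofReal_ne_top]
        exact hlt
      have heq : ENNReal.ofReal (K * t ^ 2) * ENNReal.ofReal (M2 ^ 2 / K)
          = (ENNReal.ofReal (M2 * t)) ^ 2 := by
        rw [← ENNReal.ofReal_mul (by positivity), ← ENNReal.ofReal_pow (by positivity)]
        congr 1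
        field_simp
      rw [heq] at hstrict
      exact absurd (hsq2.trans_lt hstrict) (lt_irrefl _)
    refine hQA.trans (measure_mono ?_)
    intro z hz
    have hzA : M2 * t < S z := hz
    have hbessel : S z ≤ ‖X z.1 - X z.2‖ ^ 2 := by
      have hsum := hilbert_parseval_sq bas (X z.1 - X z.2)
      have : S z = ∑ i ∈ F, (inner ℝ (X z.1 - X z.2) (bas i) : ℝ) ^ 2 := by
        rw [hSdef]
        exact Finset.sum_congr rfl fun i _ => by rw [hξeq (bas i) z]
      rw [this]
      exact sum_le_hasSum F (fun i _ => sq_nonneg _) hsum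
    exact lt_of_lt_of_le hzA hbessel
  -- total variance is finite
  have hnormmeas : Measurable fun z : Ω × Ω => ‖X z.1 - X z.2‖ ^ 2 :=
    (((hX.comp measurable_fst).sub (hX.comp measurable_snd)).norm).pow_const 2
  have hδpos : 0 < ENNReal.ofReal (M2 ^ 2 / K) := by
    rw [ENNReal.ofReal_pos]
    positivity
  have hNtot : ∑' i : w, (vf (bas i) : ℝ≥0∞) ≠ ⊤ := by
    intro htop
    set C : ℕ → Set (Ω × Ω) := fun n => {z | M2 * n < ‖X z.1 - X z.2‖ ^ 2} with hCdef
    have hCmeas : ∀ n, MeasurableSet (C n) := fun n =>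
      measurableSet_lt measurable_const hnormmeas
    have hCge : ∀ n : ℕ, ENNReal.ofReal (M2 ^ 2 / K) ≤ Q (C n) := by
      intro n
      have hlt : (n : ℝ≥0∞) < ∑' i : w, (vf (bas i) : ℝ≥0∞) := by
        rw [htop]
        exact ENNReal.natCast_lt_top n
      rw [ENNReal.tsum_eq_iSup_sum, lt_iSup_iff] at hlt
      obtain ⟨F, hF⟩ := hlt
      have hFsum : ∑ i ∈ F, (vf (bas i) : ℝ≥0∞)
          = ENNReal.ofReal (∑ i ∈ F, (vf (bas i) : ℝ)) := by
        rw [ENNReal.ofReal_sum_of_nonneg fun i _ => (vf (bas i)).coe_nonneg]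
        exact Finset.sum_congr rfl fun i _ => ENNReal.ofReal_coe_nnreal.symm
      rw [hFsum, show ((n : ℝ≥0∞)) = ENNReal.ofReal (n : ℝ) by
        rw [ENNReal.ofReal_natCast]] at hF
      have hnt : (n : ℝ) < ∑ i ∈ F, (vf (bas i) : ℝ) :=
        (ENNReal.ofReal_lt_ofReal_iff_of_nonneg (Nat.cast_nonneg n)).mp hF
      have htpos : 0 < ∑ i ∈ F, (vf (bas i) : ℝ) :=
        lt_of_le_of_lt (Nat.cast_nonneg n) hnt
      refine (key F htpos).trans (measure_mono ?_)
      intro z hz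
      have hz' : M2 * (∑ i ∈ F, (vf (bas i) : ℝ)) < ‖X z.1 - X z.2‖ ^ 2 := hz
      have : M2 * (n : ℝ) ≤ M2 * (∑ i ∈ F, (vf (bas i) : ℝ)) :=
        mul_le_mul_of_nonneg_left hnt.le hM2pos.le
      exact lt_of_le_of_lt this hz'
    have hanti : Antitone C := by
      intro n m hnm z hz
      have hz' : M2 * (m : ℝ) < ‖X z.1 - X z.2‖ ^ 2 := hz
      have : M2 * (n : ℝ) ≤ M2 * (m : ℝ) :=
        mul_le_mul_of_nonneg_left (Nat.cast_le.mpr hnm) hM2pos.le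
      exact lt_of_le_of_lt this hz'
    have hempty : ⋂ n, C n = ∅ := by
      ext z
      simp only [Set.mem_iInter, Set.mem_empty_iff_false, iff_false, not_forall]
      obtain ⟨n, hn⟩ := exists_nat_ge (‖X z.1 - X z.2‖ ^ 2 / M2)
      refine ⟨n, ?_⟩
      have : ‖X z.1 - X z.2‖ ^ 2 ≤ M2 * n := by
        rw [mul_comm]
        exact (div_le_iff₀ hM2pos).mp hn
      simp only [hCdef, Set.mem_setOf_eq, not_lt]
      exact this
    have htend := tendsto_measure_iInter_atTop (μ := Q)
      (fun n => (hCmeas n).nullMeasurableSet) hanti ⟨0, measure_ne_top Q _⟩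
    rw [hempty, measure_empty] at htend
    have : ENNReal.ofReal (M2 ^ 2 / K) ≤ 0 :=
      ge_of_tendsto htend (Filter.Eventually.of_forall hCge)
    exact absurd (lt_of_lt_of_le hδpos this) (lt_irrefl _)
  -- finiteness of the symmetrized second moment
  have hYlint : ∫⁻ z, ENNReal.ofReal (‖X z.1 - X z.2‖ ^ 2) ∂Q < ⊤ := by
    have hpt : ∀ z : Ω × Ω, ENNReal.ofReal (‖X z.1 - X z.2‖ ^ 2)
        = ∑' i : w, ENNReal.ofReal (ξ (bas i) z ^ 2) := by
      intro z
      have hsum := hilbert_parseval_sq bas (X z.1 - X z.2)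
      have h1 : ‖X z.1 - X z.2‖ ^ 2 = ∑' i : w, (inner ℝ (X z.1 - X z.2) (bas i) : ℝ) ^ 2 :=
        hsum.tsum_eq.symm
      rw [h1, ENNReal.ofReal_tsum_of_nonneg (fun i => sq_nonneg _) hsum.summable]
      exact tsum_congr fun i => by rw [hξeq (bas i) z]
    calc ∫⁻ z, ENNReal.ofReal (‖X z.1 - X z.2‖ ^ 2) ∂Q
        = ∫⁻ z, ∑' i : w, ENNReal.ofReal (ξ (bas i) z ^ 2) ∂Q := by
          exact lintegral_congr hpt
      _ = ∑' i : w, ∫⁻ z, ENNReal.ofReal (ξ (bas i) z ^ 2) ∂Q :=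
          lintegral_tsum fun i => ((hξmeas (bas i)).pow_const 2).ennreal_ofReal.aemeasurable
      _ = ∑' i : w, ENNReal.ofReal (2 * M2) * (vf (bas i) : ℝ≥0∞) := by
          refine tsum_congr fun i => ?_
          rw [hl2 (bas i)]
          rw [show 2 * ((vf (bas i) : ℝ) * M2) = (2 * M2) * (vf (bas i) : ℝ) by ring]
          rw [ENNReal.ofReal_mul (by positivity), ENNReal.ofReal_coe_nnreal]
      _ = ENNReal.ofReal (2 * M2) * ∑' i : w, (vf (bas i) : ℝ≥0∞) :=
          ENNReal.tsum_mul_left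
      _ < ⊤ := ENNReal.mul_lt_top ENNReal.ofReal_lt_top (lt_top_iff_ne_top.mpr hNtot)
  -- Fubini: pick a good translation point
  have hfmeas : Measurable fun z : Ω × Ω => ENNReal.ofReal (‖X z.1 - X z.2‖ ^ 2) :=
    hnormmeas.ennreal_ofReal
  have hfub : ∫⁻ z, ENNReal.ofReal (‖X z.1 - X z.2‖ ^ 2) ∂Q
      = ∫⁻ x, ∫⁻ y, ENNReal.ofReal (‖X x - X y‖ ^ 2) ∂P ∂P := by
    rw [hQdef]
    exact lintegral_prod _ hfmeas.aemeasurable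
  have hae : ∀ᵐ x ∂P, ∫⁻ y, ENNReal.ofReal (‖X x - X y‖ ^ 2) ∂P < ⊤ := by
    refine ae_lt_top ?_ ?_
    · exact Measurable.lintegral_prod_right' (f := fun z : Ω × Ω =>
        ENNReal.ofReal (‖X z.1 - X z.2‖ ^ 2)) hfmeas
    · rw [← hfub]
      exact hYlint.ne
  haveI : (ae P).NeBot := ae_neBot.mpr (IsProbabilityMeasure.ne_zero P)
  obtain ⟨x₀, hx₀⟩ := hae.exists
  -- conclude
  have hptfinal : ∀ ω, ((‖X ω‖₊ : ℝ≥0∞)) ^ 2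
      ≤ ENNReal.ofReal (2 * ‖X x₀ - X ω‖ ^ 2) + ENNReal.ofReal (2 * ‖X x₀‖ ^ 2) := by
    intro ω
    have h1 : ((‖X ω‖₊ : ℝ≥0∞)) ^ 2 = ENNReal.ofReal (‖X ω‖ ^ 2) := by
      rw [ENNReal.ofReal_pow (norm_nonneg _), ofReal_norm, enorm_eq_nnnorm]
    rw [h1, ← ENNReal.ofReal_add (by positivity) (by positivity)]
    refine ENNReal.ofReal_le_ofReal ?_
    have htri : ‖X ω‖ ≤ ‖X x₀ - X ω‖ + ‖X x₀‖ := by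
      have h2 : X ω = -(X x₀ - X ω) + X x₀ := by abel
      calc ‖X ω‖ = ‖-(X x₀ - X ω) + X x₀‖ := by rw [← h2]
        _ ≤ ‖-(X x₀ - X ω)‖ + ‖X x₀‖ := norm_add_le _ _
        _ = ‖X x₀ - X ω‖ + ‖X x₀‖ := by rw [norm_neg]
    have hsq := mul_self_le_mul_self (norm_nonneg (X ω)) htri
    nlinarith [hsq, sq_nonneg (‖X x₀ - X ω‖ - ‖X x₀‖)]
  calc ∫⁻ ω, ((‖X ω‖₊ : ℝ≥0∞)) ^ 2 ∂P
      ≤ ∫⁻ ω, (ENNReal.ofReal (2 * ‖X x₀ - X ω‖ ^ 2)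
          + ENNReal.ofReal (2 * ‖X x₀‖ ^ 2)) ∂P := lintegral_mono hptfinal
    _ = (∫⁻ ω, ENNReal.ofReal (2 * ‖X x₀ - X ω‖ ^ 2) ∂P)
          + ENNReal.ofReal (2 * ‖X x₀‖ ^ 2) := by
        rw [lintegral_add_right _ measurable_const, lintegral_const, measure_univ, mul_one]
    _ < ⊤ := by
        refine ENNReal.add_lt_top.mpr ⟨?_, ENNReal.ofReal_lt_top⟩
        have hre : ∀ ω, ENNReal.ofReal (2 * ‖X x₀ - X ω‖ ^ 2)
            = ENNReal.ofReal 2 * ENNReal.ofReal (‖X x₀ - X ω‖ ^ 2) := fun ω =>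
          ENNReal.ofReal_mul (by norm_num)
        simp only [hre]
        rw [lintegral_const_mul (f := fun ω => ENNReal.ofReal (‖X x₀ - X ω‖ ^ 2)) _ (((measurable_const.sub hX).norm.pow_const 2)).ennreal_ofReal]
        exact ENNReal.mul_lt_top ENNReal.ofReal_lt_top hx₀
end
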